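/- arXiv:2603.29720 — 3 statements merged into one kernel-verified Lean document; each statement's English description precedes it below -/
import Mathlib

section
/- Let (X,T) be a topological dynamical system and let μ be a T-invariant Borel probability measure on X. For all measurable partitions of unity Φ, Ψ, Φ₁, Φ₂, Ψ₁, Ψ₂ on X the following hold: (i) H̃_μ(Φ ∨ Ψ) = H̃_μ(Ψ) + H̃_μ(Φ | Ψ); (ii) H̃_μ(Φ₁ ∨ Φ₂ | Ψ) = H̃_μ(Φ₁ | Ψ) + H̃_μ(Φ₂ | Φ₁ ∨ Ψ); (iii) H̃_μ(Φ | Ψ₁ ∨ Ψ₂) ≤ H̃_μ(Φ | Ψ₁); (iv) H̃_μ(Φ) ≥ 0 and H̃_μ(Φ | Ψ) ≥ 0. -/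
open MeasureTheory Filter Set

/-! ### Partitions of unity -/

/-- A finite partition of unity on `X`: a finite family of functions `X → [0,1]`
summing to `1` everywhere. -/
structure PartUnity (X : Type*) where
  n : ℕ
  f : Fin n → X → ℝ
  nonneg : ∀ i x, 0 ≤ f i x
  le_one : ∀ i x, f i x ≤ 1
  sum_one : ∀ x, ∑ i, f i x = 1

namespace PartUnity

variable {X Y : Type*}

/-- A continuous partition of unity. -/
def Cont [TopologicalSpace X] (Φ : PartUnity X) : Prop := ∀ i, Continuous (Φ.f i)

/-- A measurable partition of unity. -/
def Meas [MeasurableSpace X] (Φ : PartUnity X) : Prop := ∀ i, Measurable (Φ.f i)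

/-- A positive partition of unity. -/
def Pos (Φ : PartUnity X) : Prop := ∀ i x, 0 < Φ.f i x

/-- The join `Φ ∨ Ψ = {φ·ψ : φ ∈ Φ, ψ ∈ Ψ}` of two partitions of unity. -/
def join (Φ Ψ : PartUnity X) : PartUnity X where
  n := Φ.n * Ψ.n
  f k x := Φ.f (finProdFinEquiv.symm k).1 x * Ψ.f (finProdFinEquiv.symm k).2 x
  nonneg k x := mul_nonneg (Φ.nonneg _ x) (Ψ.nonneg _ x)
  le_one k x := mul_le_one₀ (Φ.le_one _ x) (Ψ.nonneg _ x) (Ψ.le_one _ x)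
  sum_one x := by
    rw [← Equiv.sum_comp (finProdFinEquiv : Fin Φ.n × Fin Ψ.n ≃ Fin (Φ.n * Ψ.n))
      (fun k => Φ.f (finProdFinEquiv.symm k).1 x * Ψ.f (finProdFinEquiv.symm k).2 x)]
    simp only [Equiv.symm_apply_apply]
    rw [Fintype.sum_prod_type]
    dsimp only
    rw [← Finset.sum_mul_sum, Φ.sum_one x, Ψ.sum_one x, one_mul]

/-- Pull back a partition of unity by a map: `TΦ = {φ ∘ T : φ ∈ Φ}`. -/
def comp (Φ : PartUnity X) (T : Y → X) : PartUnity Y where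
  n := Φ.n
  f i y := Φ.f i (T y)
  nonneg i y := Φ.nonneg i (T y)
  le_one i y := Φ.le_one i (T y)
  sum_one y := Φ.sum_one (T y)

/-- The trivial partition of unity `{1}`. -/
def triv (X : Type*) : PartUnity X where
  n := 1
  f _ _ := 1
  nonneg _ _ := zero_le_one
  le_one _ _ := le_rfl
  sum_one _ := by simp

/-- `dyn T Φ n` is the dynamical join `Φ₀ⁿ⁻¹ = ⋁_{i=0}^{n-1} TⁱΦ`
(joined with a harmless trivial factor). -/
def dyn (T : X → X) (Φ : PartUnity X) : ℕ → PartUnity X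
  | 0 => triv X
  | n + 1 => Φ.join ((dyn T Φ n).comp T)

/-- The product partition of unity `Φ ⊗ Ψ` on `X × Y`. -/
def prod (Φ : PartUnity X) (Ψ : PartUnity Y) : PartUnity (X × Y) where
  n := Φ.n * Ψ.n
  f k p := Φ.f (finProdFinEquiv.symm k).1 p.1 * Ψ.f (finProdFinEquiv.symm k).2 p.2
  nonneg k p := mul_nonneg (Φ.nonneg _ _) (Ψ.nonneg _ _)
  le_one k p := mul_le_one₀ (Φ.le_one _ _) (Ψ.nonneg _ _) (Ψ.le_one _ _)
  sum_one p := by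
    rw [← Equiv.sum_comp (finProdFinEquiv : Fin Φ.n × Fin Ψ.n ≃ Fin (Φ.n * Ψ.n))
      (fun k => Φ.f (finProdFinEquiv.symm k).1 p.1 * Ψ.f (finProdFinEquiv.symm k).2 p.2)]
    simp only [Equiv.symm_apply_apply]
    rw [Fintype.sum_prod_type]
    dsimp only
    rw [← Finset.sum_mul_sum, Φ.sum_one p.1, Ψ.sum_one p.2, one_mul]

/-- The diameter of a partition of unity: the maximum of the diameters of the
supports of its members. -/
noncomputable def diam [PseudoMetricSpace X] (Φ : PartUnity X) : ℝ :=
  ⨆ i, Metric.diam (tsupport (Φ.f i))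

end PartUnity

/-! ### Metric entropy via partitions of unity -/

variable {X Y : Type*}

/-- The static entropy `H̃_μ(Φ) = Σ_φ ( −μ(φ) log μ(φ) + μ(φ log φ) )`. -/
noncomputable def statEnt [MeasurableSpace X] (μ : Measure X) (Φ : PartUnity X) : ℝ :=
  ∑ i, (-((∫ x, Φ.f i x ∂μ) * Real.log (∫ x, Φ.f i x ∂μ)) +
    ∫ x, Φ.f i x * Real.log (Φ.f i x) ∂μ)

/-- The conditional measure `μ_ψ`, determined by `μ_ψ(φ) = μ(φψ)/μ(ψ)`. -/
noncomputable def condMeas [MeasurableSpace X] (μ : Measure X) (ψ : X → ℝ) : Measure X :=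
  (ENNReal.ofReal (∫ x, ψ x ∂μ))⁻¹ • μ.withDensity (fun x => ENNReal.ofReal (ψ x))

/-- The conditional static entropy `H̃_μ(Φ | Ψ) = Σ_ψ μ(ψ) H̃_{μ_ψ}(Φ)`
(terms with `μ(ψ) = 0` vanish since they are multiplied by `μ(ψ) = 0`). -/
noncomputable def condStatEnt [MeasurableSpace X] (μ : Measure X) (Φ Ψ : PartUnity X) : ℝ :=
  ∑ j, (∫ x, Ψ.f j x ∂μ) * statEnt (condMeas μ (Ψ.f j)) Φ

/-- The local metric entropy `h̃_μ(T,Φ) = lim_n H̃_μ(Φ₀ⁿ⁻¹)/n`. -/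
noncomputable def locEnt [MeasurableSpace X] (T : X → X) (μ : Measure X) (Φ : PartUnity X) : ℝ :=
  Filter.atTop.limsup fun n : ℕ => statEnt μ (PartUnity.dyn T Φ n) / (n : ℝ)

/-- The local conditional metric entropy `h̃_μ(T,Φ|Ψ) = lim_n H̃_μ(Φ₀ⁿ⁻¹|Ψ₀ⁿ⁻¹)/n`. -/
noncomputable def condLocEnt [MeasurableSpace X] (T : X → X) (μ : Measure X)
    (Φ Ψ : PartUnity X) : ℝ :=
  Filter.atTop.limsup fun n : ℕ =>
    condStatEnt μ (PartUnity.dyn T Φ n) (PartUnity.dyn T Ψ n) / (n : ℝ)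

/-- The metric entropy `h̃_μ(T)`: supremum of `h̃_μ(T,Φ)` over continuous
partitions of unity. -/
noncomputable def metEnt [TopologicalSpace X] [MeasurableSpace X]
    (T : X → X) (μ : Measure X) : EReal :=
  ⨆ Φ : {Φ : PartUnity X // Φ.Cont}, ((locEnt T μ Φ.1 : ℝ) : EReal)

/-! ### Topological entropy via partitions of unity -/

/-- The topological static entropy `H̃(Φ) = Σ_φ sup φ`. -/
noncomputable def topStat (Φ : PartUnity X) : ℝ := ∑ i, ⨆ x, Φ.f i x

/-- The local topological entropy `h̃(T,Φ) = lim_n (1/n) log H̃(Φ₀ⁿ⁻¹)`. -/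
noncomputable def topLocEnt (T : X → X) (Φ : PartUnity X) : ℝ :=
  Filter.atTop.limsup fun n : ℕ => Real.log (topStat (PartUnity.dyn T Φ n)) / (n : ℝ)

/-- The topological entropy `h̃_top(T)`: supremum of `h̃(T,Φ)` over continuous
partitions of unity. -/
noncomputable def topEnt [TopologicalSpace X] (T : X → X) : EReal :=
  ⨆ Φ : {Φ : PartUnity X // Φ.Cont}, ((topLocEnt T Φ.1 : ℝ) : EReal)

/-! ### Classical Kolmogorov–Sinai entropy -/

/-- A finite Borel partition of `X` (indexed; atoms may be empty). -/
structure FinBorelPart (X : Type*) [MeasurableSpace X] where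
  n : ℕ
  A : Fin n → Set X
  meas : ∀ i, MeasurableSet (A i)
  disj : ∀ i j, i ≠ j → Disjoint (A i) (A j)
  cover : ⋃ i, A i = Set.univ

/-- Local Kolmogorov–Sinai entropy `h_μ(T,𝒜) = lim_n (1/n) Σ_{A ∈ 𝒜₀ⁿ⁻¹} −μ(A) log μ(A)`. -/
noncomputable def ksLocEnt [MeasurableSpace X] (T : X → X) (μ : Measure X)
    (P : FinBorelPart X) : ℝ :=
  Filter.atTop.limsup fun n : ℕ =>
    (∑ σ : Fin n → Fin P.n,
      Real.negMulLog (μ (⋂ i : Fin n, T^[(i : ℕ)] ⁻¹' P.A (σ i))).toReal) / (n : ℝ)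

/-- The Kolmogorov–Sinai metric entropy `h_μ(T)`. -/
noncomputable def ksEnt [MeasurableSpace X] (T : X → X) (μ : Measure X) : EReal :=
  ⨆ P : FinBorelPart X, ((ksLocEnt T μ P : ℝ) : EReal)

/-! ### Classical topological entropy via open covers -/

/-- A finite open cover of `X`. -/
structure FinOpenCover (X : Type*) [TopologicalSpace X] where
  n : ℕ
  U : Fin n → Set X
  opn : ∀ i, IsOpen (U i)
  cov : ⋃ i, U i = Set.univ

/-- The member `⋂_{i<n} T^{-i} U_{σ(i)}` of the dynamical refinement of a cover. -/
def dynSet (T : X → X) {m : ℕ} (U : Fin m → Set X) (n : ℕ) (σ : Fin n → Fin m) : Set X :=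
  ⋂ i : Fin n, T^[(i : ℕ)] ⁻¹' U (σ i)

/-- Minimal cardinality of a subfamily of `V` covering `S`. -/
noncomputable def coverNum {α : Type*} [Fintype α] (V : α → Set X) (S : Set X) : ℕ :=
  sInf {k | ∃ t : Finset α, t.card = k ∧ S ⊆ ⋃ i ∈ t, V i}

/-- The local classical topological entropy `h(T,𝒰)` of an open cover. -/
noncomputable def covLocEnt [TopologicalSpace X] (T : X → X) (C : FinOpenCover X) : ℝ :=
  Filter.atTop.limsup fun n : ℕ =>
    Real.log ((coverNum (fun σ : Fin n → Fin C.n => dynSet T C.U n σ) Set.univ : ℕ) : ℝ) / (n : ℝ)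

/-- The classical topological entropy `h_top(T)` via open covers. -/
noncomputable def topEntCov [TopologicalSpace X] (T : X → X) : EReal :=
  ⨆ C : FinOpenCover X, ((covLocEnt T C : ℝ) : EReal)

/-! ### Misiurewicz topological tail entropy -/

/-- The local conditional topological entropy `h(𝒰|𝒱)` of two open covers. -/
noncomputable def misCondLoc [TopologicalSpace X] (T : X → X) (CU CV : FinOpenCover X) : ℝ :=
  Filter.atTop.limsup fun n : ℕ =>
    Real.log (((⨆ τ : Fin n → Fin CV.n,
      coverNum (fun σ : Fin n → Fin CU.n => dynSet T CU.U n σ) (dynSet T CV.U n τ) : ℕ)) : ℝ) / (n : ℝ)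

/-- The conditional topological entropy `h(T|𝒱) = sup_𝒰 h(𝒰|𝒱)`. -/
noncomputable def misCond [TopologicalSpace X] (T : X → X) (CV : FinOpenCover X) : EReal :=
  ⨆ CU : FinOpenCover X, ((misCondLoc T CU CV : ℝ) : EReal)

/-- Misiurewicz's topological tail entropy `h*(T) = inf_𝒱 h(T|𝒱)`. -/
noncomputable def misTail [TopologicalSpace X] (T : X → X) : EReal :=
  ⨅ CV : FinOpenCover X, misCond T CV

/-! ### Topological tail entropy via partitions of unity -/

/-- `H̃(Φ|ψ) = Σ_φ sup_{supp ψ} φ`. -/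
noncomputable def condTopStatPU [TopologicalSpace X] (Φ : PartUnity X) (ψ : X → ℝ) : ℝ :=
  ∑ i, ⨆ x ∈ tsupport ψ, Φ.f i x

/-- The weight set `D(Ψ) = {a : inf ψ ≤ a_ψ ≤ sup ψ, Σ a_ψ = 1}`. -/
def weights (Ψ : PartUnity X) : Set (Fin Ψ.n → ℝ) :=
  {a | (∀ j, (⨅ x, Ψ.f j x) ≤ a j ∧ a j ≤ ⨆ x, Ψ.f j x) ∧ ∑ j, a j = 1}

/-- `H̃_n(Φ|Ψ) = sup_{a ∈ D(Ψ₀ⁿ⁻¹)} Σ_ψ a_ψ H̃(Φ₀ⁿ⁻¹|ψ)`. -/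
noncomputable def tailStat [TopologicalSpace X] (T : X → X) (Φ Ψ : PartUnity X) (n : ℕ) : ℝ :=
  sSup {r | ∃ a ∈ weights (PartUnity.dyn T Ψ n),
    r = ∑ j, a j * condTopStatPU (PartUnity.dyn T Φ n) ((PartUnity.dyn T Ψ n).f j)}

/-- The local conditional topological entropy `h̃(Φ|Ψ) = limsup_n (1/n) log H̃_n(Φ|Ψ)`. -/
noncomputable def tailLoc [TopologicalSpace X] (T : X → X) (Φ Ψ : PartUnity X) : ℝ :=
  Filter.atTop.limsup fun n : ℕ => Real.log (tailStat T Φ Ψ n) / (n : ℝ)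

/-- The conditional topological entropy `h̃(T|Ψ) = sup_Φ h̃(Φ|Ψ)` over continuous `Φ`. -/
noncomputable def condTopEntPU [TopologicalSpace X] (T : X → X) (Ψ : PartUnity X) : EReal :=
  ⨆ Φ : {Φ : PartUnity X // Φ.Cont}, ((tailLoc T Φ.1 Ψ : ℝ) : EReal)

/-- The topological tail entropy `h̃*(T) = inf_Ψ h̃(T|Ψ)` over continuous `Ψ`. -/
noncomputable def tailEntPU [TopologicalSpace X] (T : X → X) : EReal :=
  ⨅ Ψ : {Ψ : PartUnity X // Ψ.Cont}, condTopEntPU T Ψ.1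

/-! ### Pressures -/

/-- The Birkhoff sum `S_n g = Σ_{i<n} g ∘ Tⁱ`. -/
def birkhoff (T : X → X) (g : X → ℝ) (n : ℕ) (x : X) : ℝ :=
  ∑ i ∈ Finset.range n, g (T^[i] x)

/-- The static pressure `P̃(T,g,Φ,n) = Σ_{φ ∈ Φ₀ⁿ⁻¹} sup (φ e^{S_n g})`. -/
noncomputable def puPressStat (T : X → X) (g : X → ℝ) (Φ : PartUnity X) (n : ℕ) : ℝ :=
  ∑ i, ⨆ x, (PartUnity.dyn T Φ n).f i x * Real.exp (birkhoff T g n x)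

/-- The local topological pressure `P̃_top(T,g,Φ) = lim_n (1/n) log P̃(T,g,Φ,n)`. -/
noncomputable def puLocPress (T : X → X) (g : X → ℝ) (Φ : PartUnity X) : ℝ :=
  Filter.atTop.limsup fun n : ℕ => Real.log (puPressStat T g Φ n) / (n : ℝ)

/-- The topological pressure `P̃_top(T,g)` via continuous partitions of unity. -/
noncomputable def puTopPress [TopologicalSpace X] (T : X → X) (g : X → ℝ) : EReal :=
  ⨆ Φ : {Φ : PartUnity X // Φ.Cont}, ((puLocPress T g Φ.1 : ℝ) : EReal)

/-- The classical static pressure of an open cover: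
`inf { Σ_{V ∈ 𝒱} sup_V e^{S_n g} : 𝒱 a subcover of 𝒰₀ⁿ⁻¹ }`. -/
noncomputable def covPressStat [TopologicalSpace X] (T : X → X) (g : X → ℝ)
    (C : FinOpenCover X) (n : ℕ) : ℝ :=
  sInf {r | ∃ t : Finset (Fin n → Fin C.n),
    (Set.univ ⊆ ⋃ σ ∈ t, dynSet T C.U n σ) ∧
    r = ∑ σ ∈ t, ⨆ x ∈ dynSet T C.U n σ, Real.exp (birkhoff T g n x)}

/-- The local classical topological pressure of an open cover. -/
noncomputable def covLocPress [TopologicalSpace X] (T : X → X) (g : X → ℝ)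
    (C : FinOpenCover X) : ℝ :=
  Filter.atTop.limsup fun n : ℕ => Real.log (covPressStat T g C n) / (n : ℝ)

/-- The classical topological pressure `P_top(T,g)` via open covers. -/
noncomputable def topPress [TopologicalSpace X] (T : X → X) (g : X → ℝ) : EReal :=
  ⨆ C : FinOpenCover X, ((covLocPress T g C : ℝ) : EReal)

/-! ### Topological tail pressure -/

/-- `P̃_n(T,g,Φ|Ψ) = sup_{a ∈ D(Ψ₀ⁿ⁻¹)} Σ_ψ a_ψ Σ_φ sup_{supp ψ} (φ e^{S_n g})`. -/
noncomputable def tailPressStat [TopologicalSpace X] (T : X → X) (g : X → ℝ)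
    (Φ Ψ : PartUnity X) (n : ℕ) : ℝ :=
  sSup {r | ∃ a ∈ weights (PartUnity.dyn T Ψ n),
    r = ∑ j, a j * ∑ i, ⨆ x ∈ tsupport ((PartUnity.dyn T Ψ n).f j),
      (PartUnity.dyn T Φ n).f i x * Real.exp (birkhoff T g n x)}

/-- The local topological tail pressure `P̃(T,g,Φ|Ψ) = limsup_n (1/n) log P̃_n(T,g,Φ|Ψ)`. -/
noncomputable def tailLocPress [TopologicalSpace X] (T : X → X) (g : X → ℝ)
    (Φ Ψ : PartUnity X) : ℝ :=
  Filter.atTop.limsup fun n : ℕ => Real.log (tailPressStat T g Φ Ψ n) / (n : ℝ)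

/-- The conditional topological pressure `P̃(T,g|Ψ) = sup_Φ P̃(T,g,Φ|Ψ)` over continuous `Φ`. -/
noncomputable def condTopPressPU [TopologicalSpace X] (T : X → X) (g : X → ℝ)
    (Ψ : PartUnity X) : EReal :=
  ⨆ Φ : {Φ : PartUnity X // Φ.Cont}, ((tailLocPress T g Φ.1 Ψ : ℝ) : EReal)

/-- The topological tail pressure `P̃*(T,g) = inf_Ψ P̃(T,g|Ψ)` over continuous `Ψ`. -/
noncomputable def puTailPress [TopologicalSpace X] (T : X → X) (g : X → ℝ) : EReal :=
  ⨅ Ψ : {Ψ : PartUnity X // Ψ.Cont}, condTopPressPU T g Ψ.1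

/-! ### Classical topological tail pressure (Li–Chen–Cheng) -/

/-- The Bowen ball `B(x,ε,n) = {y : d(Tⁱx,Tⁱy) < ε for all 0 ≤ i < n}`. -/
def bowenBall [PseudoMetricSpace X] (T : X → X) (x : X) (ε : ℝ) (n : ℕ) : Set X :=
  {y | ∀ i < n, dist (T^[i] x) (T^[i] y) < ε}

/-- `E` is `(n,δ)`-separated: distinct points `y,z ∈ E` satisfy `d(Tⁱy,Tⁱz) > δ`
for some `0 ≤ i < n`. -/
def IsSep [PseudoMetricSpace X] (T : X → X) (n : ℕ) (δ : ℝ) (E : Finset X) : Prop :=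
  ∀ y ∈ E, ∀ z ∈ E, y ≠ z → ∃ i < n, δ < dist (T^[i] y) (T^[i] z)

/-- `P_n(T,g,δ,ε) = sup_x sup { Σ_{y∈E} e^{S_n g(y)} : E (n,δ)-separated ⊆ B(x,ε,n) }`. -/
noncomputable def sepPress [PseudoMetricSpace X] (T : X → X) (g : X → ℝ)
    (n : ℕ) (δ ε : ℝ) : ℝ :=
  ⨆ x : X, sSup {r | ∃ E : Finset X, ↑E ⊆ bowenBall T x ε n ∧ IsSep T n δ E ∧
    r = ∑ y ∈ E, Real.exp (birkhoff T g n y)}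

/-- The classical topological tail pressure
`P*(T,g) = lim_{ε→0} lim_{δ→0} limsup_n (1/n) log P_n(T,g,δ,ε)`
(the inner limits are monotone, hence given by `inf_ε sup_δ`). -/
noncomputable def tailPress [PseudoMetricSpace X] (T : X → X) (g : X → ℝ) : EReal :=
  ⨅ ε : {ε : ℝ // 0 < ε}, ⨆ δ : {δ : ℝ // 0 < δ},
    Filter.atTop.limsup fun n : ℕ => ((Real.log (sepPress T g n δ.1 ε.1) / (n : ℝ) : ℝ) : EReal)


section AuxEnt
open MeasureTheory Real
open scoped NNReal ENNReal
set_option linter.unusedSectionVars false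

variable {X : Type*} [MeasurableSpace X]

private lemma abs_mul_log_le_one' {x : ℝ} (h0 : 0 ≤ x) (h1 : x ≤ 1) : |x * Real.log x| ≤ 1 := by
  rcases eq_or_lt_of_le h0 with h | h
  · simp [← h]
  · have hlog : Real.log x ≤ 0 := Real.log_nonpos h.le h1
    have h2 : x * Real.log x ≤ 0 := mul_nonpos_of_nonneg_of_nonpos h0 hlog
    rw [abs_of_nonpos h2]
    have h3 : Real.log x⁻¹ ≤ x⁻¹ - 1 := Real.log_le_sub_one_of_pos (by positivity)
    rw [Real.log_inv] at h3
    have h4 : x * (-Real.log x) ≤ x * (x⁻¹ - 1) :=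
      mul_le_mul_of_nonneg_left (by linarith) h0
    have h5 : x * (x⁻¹ - 1) = 1 - x := by field_simp
    nlinarith

private lemma integrable_of_bdd {μ : Measure X} [IsFiniteMeasure μ] {f : X → ℝ}
    (hf : Measurable f) {C : ℝ} (h : ∀ x, |f x| ≤ C) : Integrable f μ :=
  ⟨hf.aestronglyMeasurable, HasFiniteIntegral.of_bounded (Filter.Eventually.of_forall h)⟩

private lemma abs_le_one_of_01 {x : ℝ} (h0 : 0 ≤ x) (h1 : x ≤ 1) : |x| ≤ 1 :=
  abs_le.2 ⟨by linarith, h1⟩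

/-- Integral with respect to the conditional measure. -/
private lemma condMeas_integral {μ : Measure X} {ψ : X → ℝ} (hψ : Measurable ψ)
    (h0 : ∀ x, 0 ≤ ψ x) (f : X → ℝ) (hc : 0 < ∫ x, ψ x ∂μ) :
    ∫ x, f x ∂(condMeas μ ψ) = (∫ x, ψ x ∂μ)⁻¹ * ∫ x, ψ x * f x ∂μ := by
  rw [condMeas, integral_smul_measure,
    show (fun x => ENNReal.ofReal (ψ x)) = fun x => ((Real.toNNReal (ψ x) : ℝ≥0) : ℝ≥0∞)
      from rfl,
    integral_withDensity_eq_integral_smul hψ.real_toNNReal f]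
  rw [smul_eq_mul]
  congr 1
  · rw [ENNReal.toReal_inv, ENNReal.toReal_ofReal hc.le]
  · apply integral_congr_ae
    filter_upwards with x
    simp [NNReal.smul_def, Real.coe_toNNReal _ (h0 x)]

private lemma condMeas_prob {μ : Measure X} [IsProbabilityMeasure μ] {ψ : X → ℝ}
    (hψ : Measurable ψ) (h0 : ∀ x, 0 ≤ ψ x) (h1 : ∀ x, ψ x ≤ 1)
    (hc : 0 < ∫ x, ψ x ∂μ) : IsProbabilityMeasure (condMeas μ ψ) := by
  constructor
  have hint : Integrable ψ μ := integrable_of_bdd hψ (fun x => abs_le_one_of_01 (h0 x) (h1 x))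
  have hl : ∫⁻ x, ENNReal.ofReal (ψ x) ∂μ = ENNReal.ofReal (∫ x, ψ x ∂μ) :=
    (ofReal_integral_eq_lintegral_ofReal hint (Filter.Eventually.of_forall h0)).symm
  rw [condMeas, Measure.smul_apply, withDensity_apply _ MeasurableSet.univ,
    Measure.restrict_univ, hl, smul_eq_mul]
  exact ENNReal.inv_mul_cancel (by simp [ENNReal.ofReal_pos.2 hc, (ENNReal.ofReal_pos.2 hc).ne'])
    ENNReal.ofReal_ne_top

/-- Reindexing sums over a join. -/
private lemma sum_join {M : Type*} [AddCommMonoid M] (Φ Ψ : PartUnity X) (F : (X → ℝ) → M) :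
    ∑ k, F ((Φ.join Ψ).f k) = ∑ i, ∑ j, F (fun x => Φ.f i x * Ψ.f j x) := by
  show ∑ k : Fin (Φ.n * Ψ.n), F ((Φ.join Ψ).f k) = _
  rw [← Equiv.sum_comp (finProdFinEquiv : Fin Φ.n × Fin Ψ.n ≃ Fin (Φ.n * Ψ.n))
    (fun k => F ((Φ.join Ψ).f k)), Fintype.sum_prod_type]
  refine Finset.sum_congr rfl fun i _ => Finset.sum_congr rfl fun j _ => ?_
  congr 1
  funext x
  show Φ.f (finProdFinEquiv.symm (finProdFinEquiv (i, j))).1 x *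
      Ψ.f (finProdFinEquiv.symm (finProdFinEquiv (i, j))).2 x = _
  rw [Equiv.symm_apply_apply]

private lemma join_meas {Φ Ψ : PartUnity X} (hΦ : Φ.Meas) (hΨ : Ψ.Meas) :
    (Φ.join Ψ).Meas := fun _ => ((hΦ _).mul (hΨ _))

private lemma neg_log_div_le {p q Q P : ℝ} (hq : 0 ≤ q) (hqp : q ≤ p) (hQ : 0 < Q) (hP : 0 < P) :
    -(q * Real.log (q / p)) ≤ -(q * Real.log (Q / P)) + p * (Q / P) - q := by
  rcases eq_or_lt_of_le hq with h | h
  · have hp : 0 ≤ p := hq.trans hqp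
    simp only [← h, mul_zero, zero_mul, neg_zero, mul_comm]
    have : 0 ≤ p * (Q / P) := mul_nonneg hp (by positivity)
    linarith
  · have hp : 0 < p := lt_of_lt_of_le h hqp
    have hlog : Real.log ((Q / P) / (q / p)) ≤ (Q / P) / (q / p) - 1 :=
      Real.log_le_sub_one_of_pos (by positivity)
    have heq : Real.log ((Q / P) / (q / p)) = Real.log (Q / P) - Real.log (q / p) :=
      Real.log_div (by positivity) (by positivity)
    rw [heq] at hlog
    have h1 : q * (Real.log (Q / P) - Real.log (q / p)) ≤ q * ((Q / P) / (q / p) - 1) :=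
      mul_le_mul_of_nonneg_left hlog h.le
    have h2 : q * ((Q / P) / (q / p) - 1) = p * (Q / P) - q := by field_simp
    rw [mul_sub] at h1
    linarith

/-- The log-sum inequality. -/
private lemma log_sum_div {n : ℕ} (p q : Fin n → ℝ) (hq : ∀ k, 0 ≤ q k) (hqp : ∀ k, q k ≤ p k) :
    ∑ k, -(q k * Real.log (q k / p k)) ≤
      -((∑ k, q k) * Real.log ((∑ k, q k) / (∑ k, p k))) := by
  set Q := ∑ k, q k with hQdef
  set P := ∑ k, p k with hPdef
  have hQ0 : 0 ≤ Q := Finset.sum_nonneg fun k _ => hq k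
  rcases eq_or_lt_of_le hQ0 with h | h
  · have hz : ∀ k ∈ Finset.univ, q k = 0 :=
      (Finset.sum_eq_zero_iff_of_nonneg (fun k _ => hq k)).1 h.symm
    have : ∀ k ∈ (Finset.univ : Finset (Fin n)), -(q k * Real.log (q k / p k)) = 0 := by
      intro k hk; rw [hz k hk]; ring
    rw [Finset.sum_congr rfl this]
    simp [← h]
  · have hP : 0 < P := lt_of_lt_of_le h (Finset.sum_le_sum fun k _ => hqp k)
    calc ∑ k, -(q k * Real.log (q k / p k))
        ≤ ∑ k, (-(q k * Real.log (Q / P)) + p k * (Q / P) - q k) :=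
          Finset.sum_le_sum fun k _ => neg_log_div_le (hq k) (hqp k) h hP
      _ = -(Q * Real.log (Q / P)) + P * (Q / P) - Q := by
          rw [Finset.sum_sub_distrib, Finset.sum_add_distrib, Finset.sum_neg_distrib,
            ← Finset.sum_mul, ← Finset.sum_mul]
      _ = -(Q * Real.log (Q / P)) := by
          have : P * (Q / P) = Q := by field_simp
          rw [this]; ring

end AuxEnt
section AuxEnt2
open MeasureTheory Real
open scoped NNReal ENNReal
set_option linter.unusedSectionVars false

variable {X : Type*} [MeasurableSpace X] {μ : Measure X}

private lemma integrable01 [IsFiniteMeasure μ] {f : X → ℝ} (hf : Measurable f)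
    (h0 : ∀ x, 0 ≤ f x) (h1 : ∀ x, f x ≤ 1) : Integrable f μ :=
  integrable_of_bdd hf fun x => abs_le_one_of_01 (h0 x) (h1 x)

private lemma integrable_mul_log [IsFiniteMeasure μ] {f g : X → ℝ}
    (hf : Measurable f) (hg : Measurable g) (hf0 : ∀ x, 0 ≤ f x) (hf1 : ∀ x, f x ≤ 1)
    (hg0 : ∀ x, 0 ≤ g x) (hg1 : ∀ x, g x ≤ 1) :
    Integrable (fun x => f x * g x * Real.log (f x)) μ := by
  refine integrable_of_bdd ((hf.mul hg).mul (Real.measurable_log.comp hf)) (C := 1) fun x => ?_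
  have h1 := abs_mul_log_le_one' (hf0 x) (hf1 x)
  have h2 : |g x| ≤ 1 := abs_le_one_of_01 (hg0 x) (hg1 x)
  calc |f x * g x * Real.log (f x)| = |f x * Real.log (f x)| * |g x| := by
        rw [← abs_mul]; congr 1; ring
    _ ≤ 1 * 1 := mul_le_mul h1 h2 (abs_nonneg _) zero_le_one
    _ = 1 := mul_one 1

/-- The key expansion: `μ(ψ)·H̃_{μ_ψ}(Φ)` in closed form. -/
private lemma weighted_statEnt_condMeas [IsProbabilityMeasure μ]
    (Φ : PartUnity X) (hΦ : Φ.Meas) {ψ : X → ℝ} (hψ : Measurable ψ)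
    (h0 : ∀ x, 0 ≤ ψ x) (h1 : ∀ x, ψ x ≤ 1) :
    (∫ x, ψ x ∂μ) * statEnt (condMeas μ ψ) Φ =
      ∑ i, (-((∫ x, Φ.f i x * ψ x ∂μ) *
          Real.log ((∫ x, Φ.f i x * ψ x ∂μ) / (∫ x, ψ x ∂μ))) +
        ∫ x, Φ.f i x * ψ x * Real.log (Φ.f i x) ∂μ) := by
  have hintψ : Integrable ψ μ := integrable01 hψ h0 h1
  have hc0 : 0 ≤ ∫ x, ψ x ∂μ := integral_nonneg h0
  rcases eq_or_lt_of_le hc0 with hc | hc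
  · -- μ(ψ) = 0 : everything vanishes
    have hae : ψ =ᵐ[μ] 0 := (integral_eq_zero_iff_of_nonneg h0 hintψ).1 hc.symm
    have hz1 : ∀ i : Fin Φ.n, ∫ x, Φ.f i x * ψ x ∂μ = 0 := by
      intro i
      rw [show (fun x => Φ.f i x * ψ x) = fun x => Φ.f i x * ψ x from rfl,
        integral_congr_ae (g := fun _ => (0 : ℝ))
          (by filter_upwards [hae] with x hx; simp [hx]), integral_const]
      simp
    have hz2 : ∀ i : Fin Φ.n, ∫ x, Φ.f i x * ψ x * Real.log (Φ.f i x) ∂μ = 0 := by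
      intro i
      rw [integral_congr_ae (g := fun _ => (0 : ℝ))
          (by filter_upwards [hae] with x hx; simp [hx]), integral_const]
      simp
    rw [← hc, zero_mul]
    symm
    refine Finset.sum_eq_zero fun i _ => ?_
    rw [hz1 i, hz2 i]
    simp
  · -- μ(ψ) > 0
    set c := ∫ x, ψ x ∂μ with hcdef
    have hcne : c ≠ 0 := hc.ne'
    have expand : statEnt (condMeas μ ψ) Φ = ∑ i,
        (-((c⁻¹ * ∫ x, ψ x * Φ.f i x ∂μ) *
            Real.log (c⁻¹ * ∫ x, ψ x * Φ.f i x ∂μ)) +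
          c⁻¹ * ∫ x, ψ x * (Φ.f i x * Real.log (Φ.f i x)) ∂μ) := by
      refine Finset.sum_congr rfl fun i _ => ?_
      rw [condMeas_integral hψ h0 (Φ.f i) hc,
        condMeas_integral hψ h0 (fun x => Φ.f i x * Real.log (Φ.f i x)) hc]
    rw [expand, Finset.mul_sum]
    refine Finset.sum_congr rfl fun i _ => ?_
    have e1 : ∫ x, ψ x * Φ.f i x ∂μ = ∫ x, Φ.f i x * ψ x ∂μ :=
      integral_congr_ae (by filter_upwards with x using by ring)
    have e2 : ∫ x, ψ x * (Φ.f i x * Real.log (Φ.f i x)) ∂μ =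
        ∫ x, Φ.f i x * ψ x * Real.log (Φ.f i x) ∂μ :=
      integral_congr_ae (by filter_upwards with x using by ring)
    rw [e1, e2]
    set q := ∫ x, Φ.f i x * ψ x ∂μ
    set r := ∫ x, Φ.f i x * ψ x * Real.log (Φ.f i x) ∂μ
    have hqc : c⁻¹ * q = q / c := by ring
    rw [hqc]
    field_simp

/-- Expanded form of the conditional static entropy. -/
private lemma condStatEnt_eq [IsProbabilityMeasure μ] (Φ Ψ : PartUnity X)
    (hΦ : Φ.Meas) (hΨ : Ψ.Meas) :
    condStatEnt μ Φ Ψ = ∑ j, ∑ i,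
      (-((∫ x, Φ.f i x * Ψ.f j x ∂μ) *
          Real.log ((∫ x, Φ.f i x * Ψ.f j x ∂μ) / (∫ x, Ψ.f j x ∂μ))) +
        ∫ x, Φ.f i x * Ψ.f j x * Real.log (Φ.f i x) ∂μ) :=
  Finset.sum_congr rfl fun j _ =>
    weighted_statEnt_condMeas Φ hΦ (hΨ j) (Ψ.nonneg j) (Ψ.le_one j)

end AuxEnt2
section AuxEnt3
open MeasureTheory Real
open scoped NNReal ENNReal
set_option linter.unusedSectionVars false
set_option linter.unusedVariables false

variable {X : Type*} [MeasurableSpace X] {μ : Measure X}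

/-- The entropy functional of a single function. -/
private noncomputable def entF (μ : Measure X) (h : X → ℝ) : ℝ :=
  -((∫ x, h x ∂μ) * Real.log (∫ x, h x ∂μ)) + ∫ x, h x * Real.log (h x) ∂μ

private lemma statEnt_eq_sum_entF (Φ : PartUnity X) :
    statEnt μ Φ = ∑ i, entF μ (Φ.f i) := rfl

/-- Fixed-`g` chain-rule identity. -/
private lemma chain_j [IsProbabilityMeasure μ] (Φ : PartUnity X) (hΦ : Φ.Meas)
    {g : X → ℝ} (hg : Measurable g) (hg0 : ∀ x, 0 ≤ g x) (hg1 : ∀ x, g x ≤ 1) :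
    ∑ i, entF μ (fun x => Φ.f i x * g x)
      = entF μ g
        + ∑ i, (-((∫ x, Φ.f i x * g x ∂μ) *
            Real.log ((∫ x, Φ.f i x * g x ∂μ) / (∫ x, g x ∂μ))) +
          ∫ x, Φ.f i x * g x * Real.log (Φ.f i x) ∂μ) := by
  have hint_fg : ∀ i : Fin Φ.n, Integrable (fun x => Φ.f i x * g x) μ := fun i =>
    integrable01 ((hΦ i).mul hg) (fun x => mul_nonneg (Φ.nonneg i x) (hg0 x))
      (fun x => mul_le_one₀ (Φ.le_one i x) (hg0 x) (hg1 x))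
  have hint_g : Integrable g μ := integrable01 hg hg0 hg1
  have hint_fglf : ∀ i : Fin Φ.n, Integrable (fun x => Φ.f i x * g x * Real.log (Φ.f i x)) μ :=
    fun i => integrable_mul_log (hΦ i) hg (Φ.nonneg i) (Φ.le_one i) hg0 hg1
  have hint_fglg : ∀ i : Fin Φ.n, Integrable (fun x => Φ.f i x * g x * Real.log (g x)) μ := by
    intro i
    have := integrable_mul_log (μ := μ) hg (hΦ i) hg0 hg1 (Φ.nonneg i) (Φ.le_one i)
    exact this.congr (by filter_upwards with x using by ring)
  -- split the log of the product
  have hsplit : ∀ i : Fin Φ.n,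
      ∫ x, (Φ.f i x * g x) * Real.log (Φ.f i x * g x) ∂μ
        = (∫ x, Φ.f i x * g x * Real.log (Φ.f i x) ∂μ)
          + ∫ x, Φ.f i x * g x * Real.log (g x) ∂μ := by
    intro i
    rw [← integral_add (hint_fglf i) (hint_fglg i)]
    refine integral_congr_ae (Filter.Eventually.of_forall fun x => ?_)
    dsimp only
    rcases eq_or_ne (Φ.f i x) 0 with h | h
    · simp [h]
    rcases eq_or_ne (g x) 0 with h' | h'
    · simp [h']
    · rw [Real.log_mul h h']; ring
  set P := ∫ x, g x ∂μ with hP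
  set Q : Fin Φ.n → ℝ := fun i => ∫ x, Φ.f i x * g x ∂μ with hQ
  have hQ0 : ∀ i, 0 ≤ Q i := fun i =>
    integral_nonneg fun x => mul_nonneg (Φ.nonneg i x) (hg0 x)
  have hQP : ∀ i, Q i ≤ P := fun i =>
    integral_mono (hint_fg i) hint_g fun x =>
      (mul_le_of_le_one_left (hg0 x) (Φ.le_one i x))
  -- log splitting for the measure values
  have hlog : ∀ i, -(Q i * Real.log (Q i))
      = -(Q i * Real.log (Q i / P)) - Q i * Real.log P := by
    intro i
    rcases eq_or_ne (Q i) 0 with h | h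
    · rw [h]; ring
    · have hPne : P ≠ 0 := by
        intro hP0
        exact h (le_antisymm (hP0 ▸ hQP i) (hQ0 i))
      rw [Real.log_div h hPne]; ring
  -- summing the members of Φ gives 1
  have hsumQ : ∑ i, Q i = P := by
    rw [hQ, ← integral_finset_sum _ fun i _ => hint_fg i]
    refine integral_congr_ae (Filter.Eventually.of_forall fun x => ?_)
    dsimp only
    rw [← Finset.sum_mul, Φ.sum_one x, one_mul]
  have hsumlg : ∑ i, ∫ x, Φ.f i x * g x * Real.log (g x) ∂μ
      = ∫ x, g x * Real.log (g x) ∂μ := by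
    rw [← integral_finset_sum _ fun i _ => hint_fglg i]
    refine integral_congr_ae (Filter.Eventually.of_forall fun x => ?_)
    dsimp only
    have : ∑ i, Φ.f i x * g x * Real.log (g x)
        = (∑ i, Φ.f i x) * (g x * Real.log (g x)) := by
      rw [Finset.sum_mul]; exact Finset.sum_congr rfl fun i _ => by ring
    rw [this, Φ.sum_one x, one_mul]
  have step : ∀ i ∈ (Finset.univ : Finset (Fin Φ.n)), entF μ (fun x => Φ.f i x * g x)
      = (-(Q i * Real.log (Q i / P)) + ∫ x, Φ.f i x * g x * Real.log (Φ.f i x) ∂μ)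
        + (∫ x, Φ.f i x * g x * Real.log (g x) ∂μ - Q i * Real.log P) := by
    intro i _
    rw [entF, hsplit i]
    have := hlog i
    show -(Q i * Real.log (Q i)) + _ = _
    rw [this]
    ring
  rw [Finset.sum_congr rfl step, Finset.sum_add_distrib, Finset.sum_sub_distrib,
    hsumlg, ← Finset.sum_mul, hsumQ, entF]
  ring

/-- Chain rule: statement (i). -/
private lemma chain [IsProbabilityMeasure μ] (Φ Ψ : PartUnity X)
    (hΦ : Φ.Meas) (hΨ : Ψ.Meas) :
    statEnt μ (Φ.join Ψ) = statEnt μ Ψ + condStatEnt μ Φ Ψ := by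
  rw [condStatEnt_eq Φ Ψ hΦ hΨ]
  calc statEnt μ (Φ.join Ψ) = ∑ i, ∑ j, entF μ (fun x => Φ.f i x * Ψ.f j x) :=
        sum_join Φ Ψ (entF μ)
    _ = ∑ j, ∑ i, entF μ (fun x => Φ.f i x * Ψ.f j x) := Finset.sum_comm
    _ = ∑ j, (entF μ (Ψ.f j)
        + ∑ i, (-((∫ x, Φ.f i x * Ψ.f j x ∂μ) *
            Real.log ((∫ x, Φ.f i x * Ψ.f j x ∂μ) / (∫ x, Ψ.f j x ∂μ))) +
          ∫ x, Φ.f i x * Ψ.f j x * Real.log (Φ.f i x) ∂μ)) :=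
        Finset.sum_congr rfl fun j _ =>
          chain_j Φ hΦ (hΨ j) (Ψ.nonneg j) (Ψ.le_one j)
    _ = _ := by rw [Finset.sum_add_distrib]; rfl

end AuxEnt3
section AuxEnt4
open MeasureTheory Real
open scoped NNReal ENNReal
set_option linter.unusedSectionVars false
set_option linter.unusedVariables false

variable {X : Type*} [MeasurableSpace X] {μ : Measure X}

private lemma statEnt_reassoc (Φ₁ Φ₂ Ψ : PartUnity X) :
    statEnt μ ((Φ₁.join Φ₂).join Ψ) = statEnt μ (Φ₂.join (Φ₁.join Ψ)) := by
  calc statEnt μ ((Φ₁.join Φ₂).join Ψ)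
      = ∑ a, ∑ c, entF μ (fun x => (Φ₁.join Φ₂).f a x * Ψ.f c x) :=
        sum_join (Φ₁.join Φ₂) Ψ (entF μ)
    _ = ∑ i₁, ∑ i₂, ∑ c, entF μ (fun x => (Φ₁.f i₁ x * Φ₂.f i₂ x) * Ψ.f c x) :=
        sum_join Φ₁ Φ₂ (fun h => ∑ c, entF μ (fun x => h x * Ψ.f c x))
    _ = ∑ i₂, ∑ i₁, ∑ c, entF μ (fun x => Φ₂.f i₂ x * (Φ₁.f i₁ x * Ψ.f c x)) := by
        rw [Finset.sum_comm]
        refine Finset.sum_congr rfl fun i₂ _ => Finset.sum_congr rfl fun i₁ _ =>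
          Finset.sum_congr rfl fun c _ => ?_
        congr 1; funext x; ring
    _ = ∑ i₂, ∑ r, entF μ (fun x => Φ₂.f i₂ x * (Φ₁.join Ψ).f r x) :=
        (Finset.sum_congr rfl fun i₂ _ =>
          (sum_join Φ₁ Ψ (fun h => entF μ (fun x => Φ₂.f i₂ x * h x))).symm)
    _ = statEnt μ (Φ₂.join (Φ₁.join Ψ)) := (sum_join Φ₂ (Φ₁.join Ψ) (entF μ)).symm

/-- Monotonicity: statement (iii). -/
private lemma cond_mono [IsProbabilityMeasure μ] (Φ Ψ₁ Ψ₂ : PartUnity X)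
    (hΦ : Φ.Meas) (hΨ₁ : Ψ₁.Meas) (hΨ₂ : Ψ₂.Meas) :
    condStatEnt μ Φ (Ψ₁.join Ψ₂) ≤ condStatEnt μ Φ Ψ₁ := by
  rw [condStatEnt_eq Φ (Ψ₁.join Ψ₂) hΦ (join_meas hΨ₁ hΨ₂), condStatEnt_eq Φ Ψ₁ hΦ hΨ₁]
  have expand : ∑ j, ∑ i,
      (-((∫ x, Φ.f i x * (Ψ₁.join Ψ₂).f j x ∂μ) *
          Real.log ((∫ x, Φ.f i x * (Ψ₁.join Ψ₂).f j x ∂μ) /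
            (∫ x, (Ψ₁.join Ψ₂).f j x ∂μ))) +
        ∫ x, Φ.f i x * (Ψ₁.join Ψ₂).f j x * Real.log (Φ.f i x) ∂μ)
      = ∑ j, ∑ k, ∑ i,
        (-((∫ x, Φ.f i x * (Ψ₁.f j x * Ψ₂.f k x) ∂μ) *
            Real.log ((∫ x, Φ.f i x * (Ψ₁.f j x * Ψ₂.f k x) ∂μ) /
              (∫ x, Ψ₁.f j x * Ψ₂.f k x ∂μ))) +
          ∫ x, Φ.f i x * (Ψ₁.f j x * Ψ₂.f k x) * Real.log (Φ.f i x) ∂μ) :=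
    sum_join Ψ₁ Ψ₂ (fun h => ∑ i,
      (-((∫ x, Φ.f i x * h x ∂μ) *
          Real.log ((∫ x, Φ.f i x * h x ∂μ) / (∫ x, h x ∂μ))) +
        ∫ x, Φ.f i x * h x * Real.log (Φ.f i x) ∂μ))
  rw [expand]
  refine Finset.sum_le_sum fun j _ => ?_
  rw [Finset.sum_comm]
  refine Finset.sum_le_sum fun i _ => ?_
  -- now fixed i, j; sum over k
  set g := Ψ₁.f j with hgdef
  have hg := hΨ₁ j
  have hg0 := Ψ₁.nonneg j
  have hg1 := Ψ₁.le_one j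
  set f := Φ.f i with hfdef
  have hf := hΦ i
  have hf0 := Φ.nonneg i
  have hf1 := Φ.le_one i
  have hint_gh : ∀ k : Fin Ψ₂.n, Integrable (fun x => g x * Ψ₂.f k x) μ := fun k =>
    integrable01 (hg.mul (hΨ₂ k)) (fun x => mul_nonneg (hg0 x) (Ψ₂.nonneg k x))
      (fun x => mul_le_one₀ (hg1 x) (Ψ₂.nonneg k x) (Ψ₂.le_one k x))
  have hint_fgh : ∀ k : Fin Ψ₂.n, Integrable (fun x => f x * (g x * Ψ₂.f k x)) μ := fun k =>
    integrable01 (hf.mul (hg.mul (hΨ₂ k)))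
      (fun x => mul_nonneg (hf0 x) (mul_nonneg (hg0 x) (Ψ₂.nonneg k x)))
      (fun x => mul_le_one₀ (hf1 x) (mul_nonneg (hg0 x) (Ψ₂.nonneg k x))
        (mul_le_one₀ (hg1 x) (Ψ₂.nonneg k x) (Ψ₂.le_one k x)))
  have hint_fg : Integrable (fun x => f x * g x) μ :=
    integrable01 (hf.mul hg) (fun x => mul_nonneg (hf0 x) (hg0 x))
      (fun x => mul_le_one₀ (hf1 x) (hg0 x) (hg1 x))
  have hint_g : Integrable g μ := integrable01 hg hg0 hg1
  have hint_fghl : ∀ k : Fin Ψ₂.n,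
      Integrable (fun x => f x * (g x * Ψ₂.f k x) * Real.log (f x)) μ := fun k =>
    (integrable_mul_log (μ := μ) hf (hg.mul (hΨ₂ k)) hf0 hf1
      (fun x => mul_nonneg (hg0 x) (Ψ₂.nonneg k x))
      (fun x => mul_le_one₀ (hg1 x) (Ψ₂.nonneg k x) (Ψ₂.le_one k x)))
  -- the log-integral parts sum exactly
  have hsum1 : ∑ k, ∫ x, f x * (g x * Ψ₂.f k x) * Real.log (f x) ∂μ
      = ∫ x, f x * g x * Real.log (f x) ∂μ := by
    rw [← integral_finset_sum _ fun k _ => hint_fghl k]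
    refine integral_congr_ae (Filter.Eventually.of_forall fun x => ?_)
    dsimp only
    have : ∑ k, f x * (g x * Ψ₂.f k x) * Real.log (f x)
        = (∑ k, Ψ₂.f k x) * (f x * g x * Real.log (f x)) := by
      rw [Finset.sum_mul]; exact Finset.sum_congr rfl fun k _ => by ring
    rw [this, Ψ₂.sum_one x, one_mul]
  have hsumq : ∑ k, ∫ x, f x * (g x * Ψ₂.f k x) ∂μ = ∫ x, f x * g x ∂μ := by
    rw [← integral_finset_sum _ fun k _ => hint_fgh k]
    refine integral_congr_ae (Filter.Eventually.of_forall fun x => ?_)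
    dsimp only
    have : ∑ k, f x * (g x * Ψ₂.f k x) = (∑ k, Ψ₂.f k x) * (f x * g x) := by
      rw [Finset.sum_mul]; exact Finset.sum_congr rfl fun k _ => by ring
    rw [this, Ψ₂.sum_one x, one_mul]
  have hsump : ∑ k, ∫ x, g x * Ψ₂.f k x ∂μ = ∫ x, g x ∂μ := by
    rw [← integral_finset_sum _ fun k _ => hint_gh k]
    refine integral_congr_ae (Filter.Eventually.of_forall fun x => ?_)
    dsimp only
    have : ∑ k, g x * Ψ₂.f k x = (∑ k, Ψ₂.f k x) * g x := by
      rw [Finset.sum_mul]; exact Finset.sum_congr rfl fun k _ => by ring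
    rw [this, Ψ₂.sum_one x, one_mul]
  rw [Finset.sum_add_distrib, hsum1]
  refine add_le_add ?_ le_rfl
  have := log_sum_div (n := Ψ₂.n) (fun k => ∫ x, g x * Ψ₂.f k x ∂μ)
    (fun k => ∫ x, f x * (g x * Ψ₂.f k x) ∂μ)
    (fun k => integral_nonneg fun x =>
      mul_nonneg (hf0 x) (mul_nonneg (hg0 x) (Ψ₂.nonneg k x)))
    (fun k => integral_mono (hint_fgh k) (hint_gh k) fun x =>
      mul_le_of_le_one_left (mul_nonneg (hg0 x) (Ψ₂.nonneg k x)) (hf1 x))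
  rw [hsumq, hsump] at this
  exact this

/-- Nonnegativity of the entropy functional term. -/
private lemma entF_term_nonneg (ν : Measure X) [IsProbabilityMeasure ν]
    {f : X → ℝ} (hf : Measurable f) (hf0 : ∀ x, 0 ≤ f x) (hf1 : ∀ x, f x ≤ 1) :
    0 ≤ -((∫ x, f x ∂ν) * Real.log (∫ x, f x ∂ν)) + ∫ x, f x * Real.log (f x) ∂ν := by
  have hint : Integrable f ν := integrable01 hf hf0 hf1
  have hintl : Integrable (fun x => f x * Real.log (f x)) ν :=
    integrable_of_bdd (hf.mul (Real.measurable_log.comp hf)) (C := 1) fun x =>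
      abs_mul_log_le_one' (hf0 x) (hf1 x)
  have ha0 : 0 ≤ ∫ x, f x ∂ν := integral_nonneg hf0
  rcases eq_or_lt_of_le ha0 with h | h
  · have hae : f =ᵐ[ν] 0 := (integral_eq_zero_iff_of_nonneg hf0 hint).1 h.symm
    have hz : ∫ x, f x * Real.log (f x) ∂ν = 0 := by
      rw [integral_congr_ae (g := fun _ => (0 : ℝ))
        (by filter_upwards [hae] with x hx; simp [hx]), integral_const]
      simp
    rw [hz, ← h]
    simp
  · set a := ∫ x, f x ∂ν with hadef
    have key : ∀ x, f x * Real.log a + f x - a ≤ f x * Real.log (f x) := by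
      intro x
      rcases eq_or_lt_of_le (hf0 x) with h' | h'
      · rw [← h']; simpa using h.le
      · have hl : Real.log (a / f x) ≤ a / f x - 1 :=
          Real.log_le_sub_one_of_pos (by positivity)
        have he : Real.log (a / f x) = Real.log a - Real.log (f x) :=
          Real.log_div h.ne' h'.ne'
        rw [he] at hl
        have h1 : f x * (Real.log a - Real.log (f x)) ≤ f x * (a / f x - 1) :=
          mul_le_mul_of_nonneg_left hl h'.le
        have h2 : f x * (a / f x - 1) = a - f x := by field_simp
        rw [mul_sub] at h1
        linarith
    have hmono : ∫ x, (f x * Real.log a + f x - a) ∂ν ≤ ∫ x, f x * Real.log (f x) ∂ν :=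
      integral_mono (((hint.mul_const _).add hint).sub (integrable_const a)) hintl key
    have e1 : ∫ x, (f x * Real.log a + f x - a) ∂ν
        = (∫ x, (f x * Real.log a + f x) ∂ν) - ∫ _x, a ∂ν :=
      integral_sub ((hint.mul_const _).add hint) (integrable_const a)
    have e2 : ∫ x, (f x * Real.log a + f x) ∂ν
        = (∫ x, f x * Real.log a ∂ν) + ∫ x, f x ∂ν :=
      integral_add (hint.mul_const _) hint
    rw [e1, e2, integral_mul_const, integral_const] at hmono
    simp only [measure_univ, probReal_univ, ENNReal.toReal_one, smul_eq_mul, one_mul, ← hadef] at hmono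
    linarith

/-- Nonnegativity of the static entropy for a probability measure. -/
private lemma statEnt_nonneg' (ν : Measure X) [IsProbabilityMeasure ν]
    (Φ : PartUnity X) (hΦ : Φ.Meas) : 0 ≤ statEnt ν Φ :=
  Finset.sum_nonneg fun i _ => entF_term_nonneg ν (hΦ i) (Φ.nonneg i) (Φ.le_one i)

/-- Nonnegativity of the conditional static entropy. -/
private lemma condStatEnt_nonneg [IsProbabilityMeasure μ] (Φ Ψ : PartUnity X)
    (hΦ : Φ.Meas) (hΨ : Ψ.Meas) : 0 ≤ condStatEnt μ Φ Ψ := by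
  refine Finset.sum_nonneg fun j _ => ?_
  have hc0 : 0 ≤ ∫ x, Ψ.f j x ∂μ := integral_nonneg (Ψ.nonneg j)
  rcases eq_or_lt_of_le hc0 with h | h
  · rw [← h, zero_mul]
  · haveI := condMeas_prob (hΨ j) (Ψ.nonneg j) (Ψ.le_one j) h
    exact mul_nonneg hc0 (statEnt_nonneg' (condMeas μ (Ψ.f j)) Φ hΦ)

end AuxEnt4
/-- Basic properties of the static entropy and conditional static
entropy with respect to measurable partitions of unity. -/
theorem statEnt_basic_properties {X : Type*} [MetricSpace X] [CompactSpace X] [Nonempty X]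
    [MeasurableSpace X] [BorelSpace X]
    (T : X → X) (hT : Continuous T) (hTsurj : Function.Surjective T)
    (μ : Measure X) [IsProbabilityMeasure μ] (hμ : MeasurePreserving T μ μ)
    (Φ Ψ Φ₁ Φ₂ Ψ₁ Ψ₂ : PartUnity X)
    (hΦ : Φ.Meas) (hΨ : Ψ.Meas) (hΦ₁ : Φ₁.Meas) (hΦ₂ : Φ₂.Meas)
    (hΨ₁ : Ψ₁.Meas) (hΨ₂ : Ψ₂.Meas) :
    statEnt μ (Φ.join Ψ) = statEnt μ Ψ + condStatEnt μ Φ Ψ ∧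
    condStatEnt μ (Φ₁.join Φ₂) Ψ = condStatEnt μ Φ₁ Ψ + condStatEnt μ Φ₂ (Φ₁.join Ψ) ∧
    condStatEnt μ Φ (Ψ₁.join Ψ₂) ≤ condStatEnt μ Φ Ψ₁ ∧
    0 ≤ statEnt μ Φ ∧ 0 ≤ condStatEnt μ Φ Ψ := by
  refine ⟨chain (μ := μ) Φ Ψ hΦ hΨ, ?_, cond_mono (μ := μ) Φ Ψ₁ Ψ₂ hΦ hΨ₁ hΨ₂,
    statEnt_nonneg' μ Φ hΦ, condStatEnt_nonneg (μ := μ) Φ Ψ hΦ hΨ⟩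
  have c1 := chain (μ := μ) (Φ₁.join Φ₂) Ψ (join_meas hΦ₁ hΦ₂) hΨ
  have c2 := chain (μ := μ) Φ₂ (Φ₁.join Ψ) hΦ₂ (join_meas hΦ₁ hΨ)
  have c3 := chain (μ := μ) Φ₁ Ψ hΦ₁ hΨ
  have r := statEnt_reassoc (μ := μ) Φ₁ Φ₂ Ψ
  linarith
end

section
/- Let (X,T) be a topological dynamical system, μ a T-invariant Borel probability measure on X, and Φ, Ψ measurable partitions of unity on X. Then the sequences n ↦ H̃_μ(Φ₀^{n−1}) and n ↦ H̃_μ(Φ₀^{n−1} | Ψ₀^{n−1}) are subadditive; in particular the limits h̃_μ(T,Φ) = lim_{n→∞} (1/n) H̃_μ(Φ₀^{n−1}) and h̃_μ(T,Φ | Ψ) = lim_{n→∞} (1/n) H̃_μ(Φ₀^{n−1} | Ψ₀^{n−1}) exist. -/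
open MeasureTheory Filter Set

/-! ### Metric entropy via partitions of unity -/

variable {X Y : Type*}

namespace EntSub

variable {X : Type*} [MeasurableSpace X]

noncomputable def Fent (μ : Measure X) (g : X → ℝ) : ℝ :=
  -((∫ x, g x ∂μ) * Real.log (∫ x, g x ∂μ)) + ∫ x, g x * Real.log (g x) ∂μ

def Good (g : X → ℝ) : Prop := Measurable g ∧ (∀ x, 0 ≤ g x) ∧ (∀ x, g x ≤ 1)

lemma Good.meas {g : X → ℝ} (h : Good g) : Measurable g := h.1
lemma Good.nn {g : X → ℝ} (h : Good g) (x : X) : 0 ≤ g x := h.2.1 x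
lemma Good.le1 {g : X → ℝ} (h : Good g) (x : X) : g x ≤ 1 := h.2.2 x
lemma Good.abs_le {g : X → ℝ} (h : Good g) (x : X) : |g x| ≤ 1 := by
  rw [abs_of_nonneg (h.nn x)]; exact h.le1 x

lemma Good.mul {g h : X → ℝ} (hg : Good g) (hh : Good h) : Good (fun x => g x * h x) :=
  ⟨hg.meas.mul hh.meas, fun x => mul_nonneg (hg.nn x) (hh.nn x),
    fun x => mul_le_one₀ (hg.le1 x) (hh.nn x) (hh.le1 x)⟩

lemma abs_mul_log_le {t : ℝ} (h0 : 0 ≤ t) (h1 : t ≤ 1) : |t * Real.log t| ≤ 1 := by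
  rcases eq_or_lt_of_le h0 with h | h
  · simp [← h]
  · have hlog : Real.log t ≤ 0 := Real.log_nonpos h0 h1
    have h2 : t * Real.log t ≤ 0 := mul_nonpos_of_nonneg_of_nonpos h0 hlog
    rw [abs_of_nonpos h2]
    have hinv : Real.log t⁻¹ ≤ t⁻¹ - 1 := Real.log_le_sub_one_of_pos (by positivity)
    have he : -(t * Real.log t) = t * Real.log t⁻¹ := by rw [Real.log_inv]; ring
    rw [he]
    calc t * Real.log t⁻¹ ≤ t * (t⁻¹ - 1) := mul_le_mul_of_nonneg_left hinv h0
      _ = 1 - t := by field_simp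
      _ ≤ 1 := by linarith

lemma integrable_of_bound {μ : Measure X} [IsFiniteMeasure μ] {g : X → ℝ} (hg : Measurable g)
    (C : ℝ) (h : ∀ x, |g x| ≤ C) : Integrable g μ :=
  (integrable_const C).mono' hg.aestronglyMeasurable (ae_of_all _ h)

lemma Good.integrable {μ : Measure X} [IsFiniteMeasure μ] {g : X → ℝ} (hg : Good g) :
    Integrable g μ :=
  integrable_of_bound hg.meas 1 hg.abs_le

lemma measurable_L {g : X → ℝ} (hg : Measurable g) :
    Measurable (fun x => g x * Real.log (g x)) :=
  hg.mul (Real.measurable_log.comp hg)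

lemma abs_L_le {g : X → ℝ} (hg : Good g) (x : X) : |g x * Real.log (g x)| ≤ 1 :=
  abs_mul_log_le (hg.nn x) (hg.le1 x)

lemma Good.integrable_L {μ : Measure X} [IsFiniteMeasure μ] {g : X → ℝ} (hg : Good g) :
    Integrable (fun x => g x * Real.log (g x)) μ :=
  integrable_of_bound (measurable_L hg.meas) 1 (abs_L_le hg)

omit [MeasurableSpace X] in
lemma abs_mul_le_one {g h : X → ℝ} (hg : ∀ x, |g x| ≤ 1) (hh : ∀ x, |h x| ≤ 1) (x : X) :
    |g x * h x| ≤ 1 := by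
  rw [abs_mul]
  calc |g x| * |h x| ≤ 1 * 1 := mul_le_mul (hg x) (hh x) (abs_nonneg _) zero_le_one
    _ = 1 := one_mul 1

/-- integrability of `g · (h log h)` for `|g| ≤ 1` and `h` good. -/
lemma integrable_g_mul_L {μ : Measure X} [IsFiniteMeasure μ] {g h : X → ℝ}
    (hgm : Measurable g) (hgb : ∀ x, |g x| ≤ 1) (hh : Good h) :
    Integrable (fun x => g x * (h x * Real.log (h x))) μ :=
  integrable_of_bound (hgm.mul (measurable_L hh.meas)) 1
    (abs_mul_le_one hgb (abs_L_le hh))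

lemma gibbs {ι : Type*} [Fintype ι] (p q : ι → ℝ) (hp : ∀ i, 0 ≤ p i) (hq : ∀ i, 0 ≤ q i)
    (hpq : ∀ i, 0 < p i → 0 < q i) (hsum : ∑ i, q i ≤ ∑ i, p i) :
    ∑ i, p i * Real.log (q i) ≤ ∑ i, p i * Real.log (p i) := by
  have key : ∀ i, p i * Real.log (q i) - p i * Real.log (p i) ≤ q i - p i := by
    intro i
    rcases eq_or_lt_of_le (hp i) with h | h
    · simp [← h, hq i]
    · have hqi := hpq i h
      have hl : Real.log (q i / p i) ≤ q i / p i - 1 := Real.log_le_sub_one_of_pos (by positivity)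
      rw [Real.log_div (ne_of_gt hqi) (ne_of_gt h)] at hl
      have hm := mul_le_mul_of_nonneg_left hl (hp i)
      calc p i * Real.log (q i) - p i * Real.log (p i)
          = p i * (Real.log (q i) - Real.log (p i)) := by ring
        _ ≤ p i * (q i / p i - 1) := hm
        _ = q i - p i := by field_simp
  have h2 : ∑ i, (p i * Real.log (q i) - p i * Real.log (p i)) ≤ ∑ i, (q i - p i) :=
    Finset.sum_le_sum (fun i _ => key i)
  rw [Finset.sum_sub_distrib, Finset.sum_sub_distrib] at h2
  linarith

lemma sum_integral_eq {μ : Measure X} {κ : Type*} [Fintype κ] {G : κ → X → ℝ} {h : X → ℝ}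
    (hint : ∀ q, Integrable (G q) μ) (hsum : ∀ x, ∑ q, G q x = h x) :
    ∑ q, ∫ x, G q x ∂μ = ∫ x, h x ∂μ := by
  rw [← integral_finset_sum _ (fun q _ => hint q)]
  exact integral_congr_ae (ae_of_all _ (fun x => hsum x))

/-- absorbing a partition-of-unity family inside a sum of integrals. -/
lemma sum_int_absorb {μ : Measure X} [IsFiniteMeasure μ] {κ : Type*} [Fintype κ]
    {δ : κ → X → ℝ} (hδ : ∀ q, Good (δ q)) (hδs : ∀ x, ∑ q, δ q x = 1)
    {h : X → ℝ} (hm : Measurable h) (hb : ∀ x, |h x| ≤ 1) :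
    ∑ q, ∫ x, δ q x * h x ∂μ = ∫ x, h x ∂μ := by
  apply sum_integral_eq
  · intro q
    exact integrable_of_bound ((hδ q).meas.mul hm) 1 (abs_mul_le_one (hδ q).abs_le hb)
  · intro x
    rw [← Finset.sum_mul, hδs, one_mul]

lemma L_mul {a b : ℝ} (ha : 0 ≤ a) (hb : 0 ≤ b) :
    (a * b) * Real.log (a * b) = b * (a * Real.log a) + a * (b * Real.log b) := by
  rcases eq_or_lt_of_le ha with h | h
  · simp [← h]
  rcases eq_or_lt_of_le hb with h' | h'
  · simp [← h']
  rw [Real.log_mul (ne_of_gt h) (ne_of_gt h')]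
  ring

/-- Expansion of `Fent` of a product of two good functions. -/
lemma Fent_pair {μ : Measure X} [IsFiniteMeasure μ] {g h : X → ℝ} (hg : Good g) (hh : Good h) :
    Fent μ (fun x => g x * h x) =
      -((∫ x, g x * h x ∂μ) * Real.log (∫ x, g x * h x ∂μ)) +
        ((∫ x, h x * (g x * Real.log (g x)) ∂μ) + ∫ x, g x * (h x * Real.log (h x)) ∂μ) := by
  have hpt : ∀ x, (g x * h x) * Real.log (g x * h x)
      = h x * (g x * Real.log (g x)) + g x * (h x * Real.log (h x)) :=
    fun x => L_mul (hg.nn x) (hh.nn x)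
  simp only [Fent]
  congr 1
  rw [integral_congr_ae (ae_of_all _ hpt)]
  exact integral_add (integrable_g_mul_L hh.meas hh.abs_le hg)
    (integrable_g_mul_L hg.meas hg.abs_le hh)

/-- Expansion of `Fent` of a product of three good functions. -/
lemma Fent_triple {μ : Measure X} [IsFiniteMeasure μ] {g h k : X → ℝ}
    (hg : Good g) (hh : Good h) (hk : Good k) :
    Fent μ (fun x => g x * h x * k x) =
      -((∫ x, g x * h x * k x ∂μ) * Real.log (∫ x, g x * h x * k x ∂μ)) +
        ((∫ x, (h x * k x) * (g x * Real.log (g x)) ∂μ) +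
         (∫ x, (g x * k x) * (h x * Real.log (h x)) ∂μ) +
         ∫ x, (g x * h x) * (k x * Real.log (k x)) ∂μ) := by
  have hpt : ∀ x, (g x * h x * k x) * Real.log (g x * h x * k x)
      = (h x * k x) * (g x * Real.log (g x)) + (g x * k x) * (h x * Real.log (h x))
        + (g x * h x) * (k x * Real.log (k x)) := by
    intro x
    rw [L_mul (mul_nonneg (hg.nn x) (hh.nn x)) (hk.nn x), L_mul (hg.nn x) (hh.nn x)]
    ring
  simp only [Fent]
  congr 1
  rw [integral_congr_ae (ae_of_all _ hpt)]
  have i1 : Integrable (fun x => (h x * k x) * (g x * Real.log (g x))) μ :=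
    integrable_g_mul_L ((hh.mul hk).meas) ((hh.mul hk).abs_le) hg
  have i2 : Integrable (fun x => (g x * k x) * (h x * Real.log (h x))) μ :=
    integrable_g_mul_L ((hg.mul hk).meas) ((hg.mul hk).abs_le) hh
  have i3 : Integrable (fun x => (g x * h x) * (k x * Real.log (k x))) μ :=
    integrable_g_mul_L ((hg.mul hh).meas) ((hg.mul hh).abs_le) hk
  have i12 : Integrable (fun x => (h x * k x) * (g x * Real.log (g x))
      + (g x * k x) * (h x * Real.log (h x))) μ := i1.add i2
  rw [integral_add i12 i3, integral_add i1 i2]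

lemma gibbs_term {p q : ℝ} (hp : 0 ≤ p) (hq : 0 ≤ q) (hpq : 0 < p → 0 < q) :
    p * Real.log q - p * Real.log p ≤ q - p := by
  rcases eq_or_lt_of_le hp with h | h
  · simp [← h, hq]
  · have hqi := hpq h
    have hl : Real.log (q / p) ≤ q / p - 1 := Real.log_le_sub_one_of_pos (by positivity)
    rw [Real.log_div (ne_of_gt hqi) (ne_of_gt h)] at hl
    have hm := mul_le_mul_of_nonneg_left hl hp
    calc p * Real.log q - p * Real.log p = p * (Real.log q - Real.log p) := by ring
      _ ≤ p * (q / p - 1) := hm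
      _ = q - p := by field_simp

lemma gibbs3 {ι κ σ : Type*} [Fintype ι] [Fintype κ] [Fintype σ]
    (P Q : ι → κ → σ → ℝ) (hp : ∀ i q r, 0 ≤ P i q r) (hq : ∀ i q r, 0 ≤ Q i q r)
    (hpq : ∀ i q r, 0 < P i q r → 0 < Q i q r)
    (hsum : ∑ i, ∑ q, ∑ r, Q i q r ≤ ∑ i, ∑ q, ∑ r, P i q r) :
    ∑ i, ∑ q, ∑ r, P i q r * Real.log (Q i q r)
      ≤ ∑ i, ∑ q, ∑ r, P i q r * Real.log (P i q r) := by
  have h2 : ∑ i, ∑ q, ∑ r, (P i q r * Real.log (Q i q r) - P i q r * Real.log (P i q r))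
      ≤ ∑ i, ∑ q, ∑ r, (Q i q r - P i q r) := by
    apply Finset.sum_le_sum; intro i _
    apply Finset.sum_le_sum; intro q _
    apply Finset.sum_le_sum; intro r _
    exact gibbs_term (hp i q r) (hq i q r) (hpq i q r)
  simp only [Finset.sum_sub_distrib] at h2
  linarith

/-- Strong subadditivity of Shannon-type sums. -/
lemma Nineq {ι κ σ : Type*} [Fintype ι] [Fintype κ] [Fintype σ]
    (p : ι → κ → σ → ℝ) (m : ι → κ → ℝ) (w : κ → σ → ℝ) (b : κ → ℝ)
    (hp : ∀ i q r, 0 ≤ p i q r)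
    (hm : ∀ i q, ∑ r, p i q r = m i q)
    (hw : ∀ q r, ∑ i, p i q r = w q r)
    (hb : ∀ q, ∑ i, m i q = b q)
    (hbw : ∀ q, ∑ r, w q r = b q) :
    (∑ i, ∑ q, m i q * Real.log (m i q)) + (∑ q, ∑ r, w q r * Real.log (w q r))
      ≤ (∑ i, ∑ q, ∑ r, p i q r * Real.log (p i q r)) + ∑ q, b q * Real.log (b q) := by
  have hm0 : ∀ i q, 0 ≤ m i q := fun i q => (hm i q) ▸ Finset.sum_nonneg (fun r _ => hp i q r)
  have hw0 : ∀ q r, 0 ≤ w q r := fun q r => (hw q r) ▸ Finset.sum_nonneg (fun i _ => hp i q r)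
  have hb0 : ∀ q, 0 ≤ b q := fun q => (hb q) ▸ Finset.sum_nonneg (fun i _ => hm0 i q)
  have hpm : ∀ i q r, p i q r ≤ m i q := fun i q r => (hm i q) ▸
    Finset.single_le_sum (fun r _ => hp i q r) (Finset.mem_univ r)
  have hpw : ∀ i q r, p i q r ≤ w q r := fun i q r => (hw q r) ▸
    Finset.single_le_sum (fun i _ => hp i q r) (Finset.mem_univ i)
  have hmb : ∀ i q, m i q ≤ b q := fun i q => (hb q) ▸
    Finset.single_le_sum (fun i _ => hm0 i q) (Finset.mem_univ i)
  have gib : ∑ i, ∑ q, ∑ r, p i q r *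
        Real.log (if b q = 0 then 0 else m i q * w q r / b q)
      ≤ ∑ i, ∑ q, ∑ r, p i q r * Real.log (p i q r) := by
    apply gibbs3 p (fun i q r => if b q = 0 then 0 else m i q * w q r / b q) hp
    · intro i q r
      split
      · exact le_rfl
      · exact div_nonneg (mul_nonneg (hm0 i q) (hw0 q r)) (hb0 q)
    · intro i q r ht
      have hbt : 0 < b q := lt_of_lt_of_le ht (le_trans (hpm i q r) (hmb i q))
      rw [if_neg (ne_of_gt hbt)]
      have h1 : 0 < m i q := lt_of_lt_of_le ht (hpm i q r)
      have h2 : 0 < w q r := lt_of_lt_of_le ht (hpw i q r)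
      positivity
    · rw [Finset.sum_comm (f := fun i q => ∑ r, if b q = 0 then 0 else m i q * w q r / b q),
        Finset.sum_comm (f := fun i q => ∑ r, p i q r)]
      apply Finset.sum_le_sum
      intro q _
      by_cases hbq : b q = 0
      · simp only [hbq, if_true, eq_self_iff_true, Finset.sum_const_zero]
        exact Finset.sum_nonneg fun i _ => Finset.sum_nonneg fun r _ => hp i q r
      · simp only [if_neg hbq]
        have h3 : ∀ i, ∑ r, m i q * w q r / b q = m i q := by
          intro i
          have h1 : ∀ r, m i q * w q r / b q = (m i q / b q) * w q r := fun r => by ring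
          rw [Finset.sum_congr rfl (fun r _ => h1 r), ← Finset.mul_sum, hbw,
            div_mul_cancel₀ _ hbq]
        rw [Finset.sum_congr rfl (fun i _ => h3 i)]
        rw [Finset.sum_congr rfl (fun i _ => hm i q), hb]
  have term : ∀ i q r, p i q r *
      Real.log (if b q = 0 then 0 else m i q * w q r / b q)
      = p i q r * Real.log (m i q) + p i q r * Real.log (w q r)
        - p i q r * Real.log (b q) := by
    intro i q r
    rcases eq_or_lt_of_le (hp i q r) with h | h
    · simp [← h]
    · have hm1 : 0 < m i q := lt_of_lt_of_le h (hpm i q r)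
      have hw1 : 0 < w q r := lt_of_lt_of_le h (hpw i q r)
      have hb1 : 0 < b q := lt_of_lt_of_le hm1 (hmb i q)
      rw [if_neg (ne_of_gt hb1), Real.log_div (by positivity) (ne_of_gt hb1),
        Real.log_mul (ne_of_gt hm1) (ne_of_gt hw1)]
      ring
  have lhs_eq : ∑ i, ∑ q, ∑ r, p i q r *
      Real.log (if b q = 0 then 0 else m i q * w q r / b q)
      = (∑ i, ∑ q, m i q * Real.log (m i q)) + (∑ q, ∑ r, w q r * Real.log (w q r))
        - ∑ q, b q * Real.log (b q) := by
    have hsplit : ∑ i, ∑ q, ∑ r, p i q r *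
        Real.log (if b q = 0 then 0 else m i q * w q r / b q)
        = (∑ i, ∑ q, ∑ r, p i q r * Real.log (m i q))
          + (∑ i, ∑ q, ∑ r, p i q r * Real.log (w q r))
          - ∑ i, ∑ q, ∑ r, p i q r * Real.log (b q) := by
      rw [Finset.sum_congr rfl fun i _ => Finset.sum_congr rfl fun q _ =>
        Finset.sum_congr rfl fun r _ => term i q r]
      simp only [Finset.sum_add_distrib, Finset.sum_sub_distrib]
    have hA : ∑ i, ∑ q, ∑ r, p i q r * Real.log (m i q)
        = ∑ i, ∑ q, m i q * Real.log (m i q) := by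
      apply Finset.sum_congr rfl; intro i _
      apply Finset.sum_congr rfl; intro q _
      rw [← Finset.sum_mul, hm]
    have hB : ∑ i, ∑ q, ∑ r, p i q r * Real.log (w q r)
        = ∑ q, ∑ r, w q r * Real.log (w q r) := by
      rw [Finset.sum_comm (f := fun i q => ∑ r, p i q r * Real.log (w q r))]
      apply Finset.sum_congr rfl; intro q _
      rw [Finset.sum_comm (f := fun i r => p i q r * Real.log (w q r))]
      apply Finset.sum_congr rfl; intro r _
      rw [← Finset.sum_mul, hw]
    have hC : ∑ i, ∑ q, ∑ r, p i q r * Real.log (b q)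
        = ∑ q, b q * Real.log (b q) := by
      have h1 : ∀ i q, ∑ r, p i q r * Real.log (b q) = m i q * Real.log (b q) := by
        intro i q; rw [← Finset.sum_mul, hm]
      rw [Finset.sum_congr rfl (fun i _ => Finset.sum_congr rfl (fun q _ => h1 i q))]
      rw [Finset.sum_comm (f := fun i q => m i q * Real.log (b q))]
      apply Finset.sum_congr rfl; intro q _
      rw [← Finset.sum_mul, hb]
    rw [hsplit, hA, hB, hC]
  rw [lhs_eq] at gib
  linarith

lemma sum_int_absorb' {μ : Measure X} [IsFiniteMeasure μ] {κ : Type*} [Fintype κ]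
    {δ : κ → X → ℝ} (hδ : ∀ q, Good (δ q)) (hδs : ∀ x, ∑ q, δ q x = 1)
    {h : X → ℝ} (hm : Measurable h) (hb : ∀ x, |h x| ≤ 1) :
    ∑ q, ∫ x, h x * δ q x ∂μ = ∫ x, h x ∂μ := by
  apply sum_integral_eq
  · intro q
    exact integrable_of_bound (hm.mul (hδ q).meas) 1 (abs_mul_le_one hb (hδ q).abs_le)
  · intro x
    rw [← Finset.mul_sum, hδs, mul_one]

/-- Strong subadditivity of the `Fent` sums. -/
lemma ssa {μ : Measure X} [IsProbabilityMeasure μ] {ι κ σ : Type*}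
    [Fintype ι] [Fintype κ] [Fintype σ]
    (α : ι → X → ℝ) (γ : κ → X → ℝ) (β : σ → X → ℝ)
    (hα : ∀ i, Good (α i)) (hγ : ∀ q, Good (γ q)) (hβ : ∀ r, Good (β r))
    (hαs : ∀ x, ∑ i, α i x = 1) (hγs : ∀ x, ∑ q, γ q x = 1) (hβs : ∀ x, ∑ r, β r x = 1) :
    (∑ i, ∑ q, ∑ r, Fent μ (fun x => α i x * γ q x * β r x)) + ∑ q, Fent μ (γ q)
      ≤ (∑ i, ∑ q, Fent μ (fun x => α i x * γ q x))
        + ∑ q, ∑ r, Fent μ (fun x => γ q x * β r x) := by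
  -- marginal identities
  have hp1 : ∀ (i : ι) (q : κ) (r : σ), 0 ≤ ∫ x, α i x * γ q x * β r x ∂μ := fun i q r =>
    integral_nonneg fun x =>
      mul_nonneg (mul_nonneg ((hα i).nn x) ((hγ q).nn x)) ((hβ r).nn x)
  have hm1 : ∀ (i : ι) (q : κ), ∑ r, ∫ x, α i x * γ q x * β r x ∂μ
      = ∫ x, α i x * γ q x ∂μ := fun i q =>
    sum_int_absorb' hβ hβs ((hα i).mul (hγ q)).meas ((hα i).mul (hγ q)).abs_le
  have hw1 : ∀ (q : κ) (r : σ), ∑ i, ∫ x, α i x * γ q x * β r x ∂μ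
      = ∫ x, γ q x * β r x ∂μ := by
    intro q r
    have h0 : ∀ i : ι, ∫ x, α i x * γ q x * β r x ∂μ
        = ∫ x, α i x * (γ q x * β r x) ∂μ := fun i =>
      integral_congr_ae (ae_of_all _ fun x => by ring)
    rw [Finset.sum_congr rfl fun i _ => h0 i]
    exact sum_int_absorb hα hαs ((hγ q).mul (hβ r)).meas ((hγ q).mul (hβ r)).abs_le
  have hb1 : ∀ q : κ, ∑ i, ∫ x, α i x * γ q x ∂μ = ∫ x, γ q x ∂μ := fun q =>
    sum_int_absorb hα hαs (hγ q).meas (hγ q).abs_le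
  have hbw1 : ∀ q : κ, ∑ r, ∫ x, γ q x * β r x ∂μ = ∫ x, γ q x ∂μ := fun q =>
    sum_int_absorb' hβ hβs (hγ q).meas (hγ q).abs_le
  have NI : (∑ i, ∑ q, (∫ x, α i x * γ q x ∂μ) * Real.log (∫ x, α i x * γ q x ∂μ))
      + (∑ q, ∑ r, (∫ x, γ q x * β r x ∂μ) * Real.log (∫ x, γ q x * β r x ∂μ))
      ≤ (∑ i, ∑ q, ∑ r, (∫ x, α i x * γ q x * β r x ∂μ)
            * Real.log (∫ x, α i x * γ q x * β r x ∂μ))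
        + ∑ q, (∫ x, γ q x ∂μ) * Real.log (∫ x, γ q x ∂μ) :=
    Nineq _ _ _ _ hp1 hm1 hw1 hb1 hbw1
  -- triple marginal sums
  have T1 : ∑ i, ∑ q, ∑ r, ∫ x, (γ q x * β r x) * (α i x * Real.log (α i x)) ∂μ
      = ∑ i, ∫ x, α i x * Real.log (α i x) ∂μ := by
    apply Finset.sum_congr rfl; intro i _
    have h0 : ∀ (q : κ) (r : σ), ∫ x, (γ q x * β r x) * (α i x * Real.log (α i x)) ∂μ
        = ∫ x, (γ q x * (α i x * Real.log (α i x))) * β r x ∂μ := fun q r =>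
      integral_congr_ae (ae_of_all _ fun x => by ring)
    rw [Finset.sum_congr rfl fun q _ => Finset.sum_congr rfl fun r _ => h0 q r]
    have h1 : ∀ q : κ, ∑ r, ∫ x, (γ q x * (α i x * Real.log (α i x))) * β r x ∂μ
        = ∫ x, γ q x * (α i x * Real.log (α i x)) ∂μ := fun q =>
      sum_int_absorb' hβ hβs ((hγ q).meas.mul (measurable_L (hα i).meas))
        (abs_mul_le_one (hγ q).abs_le (abs_L_le (hα i)))
    rw [Finset.sum_congr rfl fun q _ => h1 q]
    exact sum_int_absorb hγ hγs (measurable_L (hα i).meas) (abs_L_le (hα i))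
  have T2 : ∑ i, ∑ q, ∑ r, ∫ x, (α i x * β r x) * (γ q x * Real.log (γ q x)) ∂μ
      = ∑ q, ∫ x, γ q x * Real.log (γ q x) ∂μ := by
    have h0 : ∀ (i : ι) (q : κ), ∑ r, ∫ x, (α i x * β r x) * (γ q x * Real.log (γ q x)) ∂μ
        = ∫ x, α i x * (γ q x * Real.log (γ q x)) ∂μ := by
      intro i q
      have h2 : ∀ r : σ, ∫ x, (α i x * β r x) * (γ q x * Real.log (γ q x)) ∂μ
          = ∫ x, (α i x * (γ q x * Real.log (γ q x))) * β r x ∂μ := fun r =>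
        integral_congr_ae (ae_of_all _ fun x => by ring)
      rw [Finset.sum_congr rfl fun r _ => h2 r]
      exact sum_int_absorb' hβ hβs ((hα i).meas.mul (measurable_L (hγ q).meas))
        (abs_mul_le_one (hα i).abs_le (abs_L_le (hγ q)))
    rw [Finset.sum_congr rfl fun i _ => Finset.sum_congr rfl fun q _ => h0 i q]
    rw [Finset.sum_comm (f := fun (i : ι) (q : κ) =>
      ∫ x, α i x * (γ q x * Real.log (γ q x)) ∂μ)]
    apply Finset.sum_congr rfl; intro q _
    exact sum_int_absorb hα hαs (measurable_L (hγ q).meas) (abs_L_le (hγ q))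
  have T3 : ∑ i, ∑ q, ∑ r, ∫ x, (α i x * γ q x) * (β r x * Real.log (β r x)) ∂μ
      = ∑ r, ∫ x, β r x * Real.log (β r x) ∂μ := by
    have h0 : ∀ (i : ι) (r : σ), ∑ q, ∫ x, (α i x * γ q x) * (β r x * Real.log (β r x)) ∂μ
        = ∫ x, α i x * (β r x * Real.log (β r x)) ∂μ := by
      intro i r
      have h2 : ∀ q : κ, ∫ x, (α i x * γ q x) * (β r x * Real.log (β r x)) ∂μ
          = ∫ x, γ q x * (α i x * (β r x * Real.log (β r x))) ∂μ := fun q =>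
        integral_congr_ae (ae_of_all _ fun x => by ring)
      rw [Finset.sum_congr rfl fun q _ => h2 q]
      exact sum_int_absorb hγ hγs ((hα i).meas.mul (measurable_L (hβ r).meas))
        (abs_mul_le_one (hα i).abs_le (abs_L_le (hβ r)))
    have h1 : ∀ i : ι, ∑ q, ∑ r, ∫ x, (α i x * γ q x) * (β r x * Real.log (β r x)) ∂μ
        = ∑ r, ∫ x, α i x * (β r x * Real.log (β r x)) ∂μ := by
      intro i
      rw [Finset.sum_comm (f := fun (q : κ) (r : σ) =>
        ∫ x, (α i x * γ q x) * (β r x * Real.log (β r x)) ∂μ)]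
      exact Finset.sum_congr rfl fun r _ => h0 i r
    rw [Finset.sum_congr rfl fun i _ => h1 i]
    rw [Finset.sum_comm (f := fun (i : ι) (r : σ) =>
      ∫ x, α i x * (β r x * Real.log (β r x)) ∂μ)]
    apply Finset.sum_congr rfl; intro r _
    exact sum_int_absorb hα hαs (measurable_L (hβ r).meas) (abs_L_le (hβ r))
  -- pair marginal sums
  have U1 : ∑ i, ∑ q, ∫ x, γ q x * (α i x * Real.log (α i x)) ∂μ
      = ∑ i, ∫ x, α i x * Real.log (α i x) ∂μ :=
    Finset.sum_congr rfl fun i _ =>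
      sum_int_absorb hγ hγs (measurable_L (hα i).meas) (abs_L_le (hα i))
  have U2 : ∑ i, ∑ q, ∫ x, α i x * (γ q x * Real.log (γ q x)) ∂μ
      = ∑ q, ∫ x, γ q x * Real.log (γ q x) ∂μ := by
    rw [Finset.sum_comm (f := fun (i : ι) (q : κ) =>
      ∫ x, α i x * (γ q x * Real.log (γ q x)) ∂μ)]
    exact Finset.sum_congr rfl fun q _ =>
      sum_int_absorb hα hαs (measurable_L (hγ q).meas) (abs_L_le (hγ q))
  have V1 : ∑ q, ∑ r, ∫ x, β r x * (γ q x * Real.log (γ q x)) ∂μ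
      = ∑ q, ∫ x, γ q x * Real.log (γ q x) ∂μ :=
    Finset.sum_congr rfl fun q _ =>
      sum_int_absorb hβ hβs (measurable_L (hγ q).meas) (abs_L_le (hγ q))
  have V2 : ∑ q, ∑ r, ∫ x, γ q x * (β r x * Real.log (β r x)) ∂μ
      = ∑ r, ∫ x, β r x * Real.log (β r x) ∂μ := by
    rw [Finset.sum_comm (f := fun (q : κ) (r : σ) =>
      ∫ x, γ q x * (β r x * Real.log (β r x)) ∂μ)]
    exact Finset.sum_congr rfl fun r _ =>
      sum_int_absorb hγ hγs (measurable_L (hβ r).meas) (abs_L_le (hβ r))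
  -- expansions
  have E3 : ∑ i, ∑ q, ∑ r, Fent μ (fun x => α i x * γ q x * β r x)
      = -(∑ i, ∑ q, ∑ r, (∫ x, α i x * γ q x * β r x ∂μ)
            * Real.log (∫ x, α i x * γ q x * β r x ∂μ))
        + ((∑ i, ∫ x, α i x * Real.log (α i x) ∂μ)
           + (∑ q, ∫ x, γ q x * Real.log (γ q x) ∂μ)
           + ∑ r, ∫ x, β r x * Real.log (β r x) ∂μ) := by
    rw [Finset.sum_congr rfl fun i _ => Finset.sum_congr rfl fun q _ =>
      Finset.sum_congr rfl fun r _ => Fent_triple (hα i) (hγ q) (hβ r)]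
    simp only [Finset.sum_add_distrib, Finset.sum_neg_distrib]
    rw [T1, T2, T3]
  have E2 : ∑ i, ∑ q, Fent μ (fun x => α i x * γ q x)
      = -(∑ i, ∑ q, (∫ x, α i x * γ q x ∂μ) * Real.log (∫ x, α i x * γ q x ∂μ))
        + ((∑ i, ∫ x, α i x * Real.log (α i x) ∂μ)
           + ∑ q, ∫ x, γ q x * Real.log (γ q x) ∂μ) := by
    rw [Finset.sum_congr rfl fun i _ => Finset.sum_congr rfl fun q _ =>
      Fent_pair (hα i) (hγ q)]
    simp only [Finset.sum_add_distrib, Finset.sum_neg_distrib]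
    rw [U1, U2]
  have E2' : ∑ q, ∑ r, Fent μ (fun x => γ q x * β r x)
      = -(∑ q, ∑ r, (∫ x, γ q x * β r x ∂μ) * Real.log (∫ x, γ q x * β r x ∂μ))
        + ((∑ q, ∫ x, γ q x * Real.log (γ q x) ∂μ)
           + ∑ r, ∫ x, β r x * Real.log (β r x) ∂μ) := by
    rw [Finset.sum_congr rfl fun q _ => Finset.sum_congr rfl fun r _ =>
      Fent_pair (hγ q) (hβ r)]
    simp only [Finset.sum_add_distrib, Finset.sum_neg_distrib]
    rw [V1, V2]
  have Eg : ∑ q, Fent μ (γ q)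
      = -(∑ q, (∫ x, γ q x ∂μ) * Real.log (∫ x, γ q x ∂μ))
        + ∑ q, ∫ x, γ q x * Real.log (γ q x) ∂μ := by
    simp only [Fent]
    simp only [Finset.sum_add_distrib, Finset.sum_neg_distrib]
  rw [E3, E2, E2', Eg]
  linarith

/-- `Fent` is nonnegative for probability measures. -/
lemma Fent_nonneg {μ : Measure X} [IsProbabilityMeasure μ] {g : X → ℝ} (hg : Good g) :
    0 ≤ Fent μ g := by
  set c := ∫ x, g x ∂μ with hc
  have hc0 : 0 ≤ c := integral_nonneg hg.nn
  rcases eq_or_lt_of_le hc0 with h | h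
  · have hg0 : g =ᵐ[μ] 0 := by
      rw [← integral_eq_zero_iff_of_nonneg hg.nn hg.integrable]; exact h.symm
    have : (fun x => g x * Real.log (g x)) =ᵐ[μ] 0 := by
      filter_upwards [hg0] with x hx
      simp [hx]
    rw [Fent, ← hc, ← h]
    rw [integral_congr_ae this]
    simp
  · have key : ∀ x, g x - c ≤ g x * Real.log (g x) - g x * Real.log c := by
      intro x
      rcases eq_or_lt_of_le (hg.nn x) with h' | h'
      · simp [← h']; linarith
      · have : Real.log (c / g x) ≤ c / g x - 1 := Real.log_le_sub_one_of_pos (by positivity)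
        rw [Real.log_div (ne_of_gt h) (ne_of_gt h')] at this
        have := mul_le_mul_of_nonneg_left this (hg.nn x)
        have h2 : g x * (c / g x - 1) = c - g x := by field_simp
        nlinarith
    have hint1 : Integrable (fun x => g x - c) μ := hg.integrable.sub (integrable_const c)
    have hint2 : Integrable (fun x => g x * Real.log (g x) - g x * Real.log c) μ :=
      hg.integrable_L.sub (hg.integrable.mul_const _)
    have := integral_mono hint1 hint2 key
    rw [integral_sub hg.integrable (integrable_const c),
      integral_sub hg.integrable_L (hg.integrable.mul_const _), integral_const,
      integral_mul_const] at this
    simp only [measure_univ, probReal_univ, ENNReal.toReal_one, smul_eq_mul, one_mul] at this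
    rw [Fent, ← hc]
    nlinarith [this]


/-! Bridge between `Fent`/`Good` and `PartUnity`. -/
set_option linter.unusedSectionVars false

lemma Good.one {X : Type*} [MeasurableSpace X] : Good (fun _ : X => (1:ℝ)) :=
  ⟨measurable_const, fun _ => zero_le_one, fun _ => le_rfl⟩

lemma Fent_const_one {X : Type*} [MeasurableSpace X] {μ : Measure X} [IsProbabilityMeasure μ] :
    Fent μ (fun _ : X => (1:ℝ)) = 0 := by
  rw [Fent]
  have h1 : ∫ _ : X, (1:ℝ) ∂μ = 1 := by
    rw [integral_const]; simp
  rw [h1]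
  simp

/-- Pair subadditivity, derived from `ssa`. -/
lemma ssa_pair {X : Type*} [MeasurableSpace X] {μ : Measure X} [IsProbabilityMeasure μ]
    {ι σ : Type*} [Fintype ι] [Fintype σ]
    (α : ι → X → ℝ) (β : σ → X → ℝ)
    (hα : ∀ i, Good (α i)) (hβ : ∀ r, Good (β r))
    (hαs : ∀ x, ∑ i, α i x = 1) (hβs : ∀ x, ∑ r, β r x = 1) :
    ∑ i, ∑ r, Fent μ (fun x => α i x * β r x)
      ≤ (∑ i, Fent μ (α i)) + ∑ r, Fent μ (β r) := by
  have h := ssa (μ := μ) α (fun _ : Fin 1 => fun _ : X => (1:ℝ)) β hα (fun _ => Good.one) hβ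
    hαs (fun x => by simp) hβs
  simp only [mul_one, one_mul, Fin.sum_univ_one, Fent_const_one, add_zero] at h
  exact h

namespace PU

open PartUnity

variable {X : Type*} [MeasurableSpace X]

lemma good_of_meas {Φ : PartUnity X} (hΦ : Φ.Meas) (i : Fin Φ.n) : Good (Φ.f i) :=
  ⟨hΦ i, Φ.nonneg i, Φ.le_one i⟩

lemma statEnt_eq (μ : Measure X) (Φ : PartUnity X) :
    statEnt μ Φ = ∑ i, Fent μ (Φ.f i) := rfl

lemma meas_join {Φ Ψ : PartUnity X} (hΦ : Φ.Meas) (hΨ : Ψ.Meas) : (Φ.join Ψ).Meas :=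
  fun k => (hΦ _).mul (hΨ _)

lemma meas_comp {Y : Type*} [MeasurableSpace Y] {Φ : PartUnity X} (hΦ : Φ.Meas)
    {T : Y → X} (hT : Measurable T) : (Φ.comp T).Meas :=
  fun i => (hΦ i).comp hT

lemma meas_triv : (PartUnity.triv X).Meas := fun _ => measurable_const

lemma meas_dyn {Φ : PartUnity X} (hΦ : Φ.Meas) {T : X → X} (hT : Measurable T) :
    ∀ n, (PartUnity.dyn T Φ n).Meas
  | 0 => meas_triv
  | n + 1 => meas_join hΦ (meas_comp (meas_dyn hΦ hT n) hT)

/-- Sums over the join, for an arbitrary functional `G`. -/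
lemma sum_join (G : (X → ℝ) → ℝ) (Φ Ψ : PartUnity X) :
    ∑ k, G ((Φ.join Ψ).f k) = ∑ i, ∑ j, G (fun x => Φ.f i x * Ψ.f j x) := by
  show ∑ k : Fin (Φ.n * Ψ.n), G ((Φ.join Ψ).f k) = _
  rw [← Equiv.sum_comp (finProdFinEquiv : Fin Φ.n × Fin Ψ.n ≃ Fin (Φ.n * Ψ.n))
    (fun k => G ((Φ.join Ψ).f k))]
  simp only [PartUnity.join, Equiv.symm_apply_apply]
  rw [Fintype.sum_prod_type]

/-- Splitting of the dynamical join, for an arbitrary functional `G`. -/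
lemma dyn_split (T : X → X) (Φ : PartUnity X) :
    ∀ (n : ℕ) (G : (X → ℝ) → ℝ) (m : ℕ),
    ∑ k, G ((PartUnity.dyn T Φ (n + m)).f k)
      = ∑ a, ∑ b, G (fun x =>
          (PartUnity.dyn T Φ n).f a x * (PartUnity.dyn T Φ m).f b (T^[n] x))
  | 0, G, m => by
    rw [Nat.zero_add]
    simp only [PartUnity.dyn, PartUnity.triv, Function.iterate_zero_apply, one_mul]
    exact (Fin.sum_univ_one (f := fun _ : Fin 1 =>
      ∑ b, G (fun x => (PartUnity.dyn T Φ m).f b x))).symm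
  | n + 1, G, m => by
    have hstep : (n + 1) + m = (n + m) + 1 := Nat.succ_add n m
    rw [hstep]
    show ∑ k, G ((Φ.join ((PartUnity.dyn T Φ (n + m)).comp T)).f k) = _
    rw [sum_join G Φ ((PartUnity.dyn T Φ (n + m)).comp T)]
    have hIH : ∀ i : Fin Φ.n,
        ∑ j, G (fun x => Φ.f i x * ((PartUnity.dyn T Φ (n + m)).comp T).f j x)
        = ∑ a, ∑ b, G (fun x => Φ.f i x *
            ((PartUnity.dyn T Φ n).f a (T x) * (PartUnity.dyn T Φ m).f b (T^[n] (T x)))) :=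
      fun i => dyn_split T Φ n (fun g => G (fun x => Φ.f i x * g (T x))) m
    rw [Finset.sum_congr rfl fun i _ => hIH i]
    -- now both sides are triple sums; rearrange the RHS
    show _ = ∑ a, ∑ b, G (fun x =>
      (Φ.join ((PartUnity.dyn T Φ n).comp T)).f a x * (PartUnity.dyn T Φ m).f b (T^[n+1] x))
    rw [Finset.sum_comm (f := fun a b => G (fun x =>
      (Φ.join ((PartUnity.dyn T Φ n).comp T)).f a x * (PartUnity.dyn T Φ m).f b (T^[n+1] x)))]
    have hjoin : ∀ b,
        ∑ a, G (fun x => (Φ.join ((PartUnity.dyn T Φ n).comp T)).f a x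
            * (PartUnity.dyn T Φ m).f b (T^[n+1] x))
        = ∑ i, ∑ a, G (fun x => (Φ.f i x * (PartUnity.dyn T Φ n).f a (T x))
            * (PartUnity.dyn T Φ m).f b (T^[n+1] x)) :=
      fun b => sum_join (fun g => G (fun x => g x * (PartUnity.dyn T Φ m).f b (T^[n+1] x)))
        Φ ((PartUnity.dyn T Φ n).comp T)
    rw [Finset.sum_congr rfl fun b _ => hjoin b]
    rw [Finset.sum_comm (f := fun b i => ∑ a, G (fun x =>
      (Φ.f i x * (PartUnity.dyn T Φ n).f a (T x))
        * (PartUnity.dyn T Φ m).f b (T^[n+1] x)))]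
    apply Finset.sum_congr rfl; intro i _
    rw [Finset.sum_comm (f := fun b a => G (fun x =>
      (Φ.f i x * (PartUnity.dyn T Φ n).f a (T x))
        * (PartUnity.dyn T Φ m).f b (T^[n+1] x)))]
    apply Finset.sum_congr rfl; intro a _
    apply Finset.sum_congr rfl; intro b _
    apply congrArg G
    funext x
    rw [Function.iterate_succ_apply, mul_assoc]

/-- Invariance of `Fent` under a measure-preserving map. -/
lemma Fent_comp {μ : Measure X} {S : X → X} (hS : MeasurePreserving S μ μ)
    {g : X → ℝ} (hg : Measurable g) :
    Fent μ (fun x => g (S x)) = Fent μ g := by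
  have hmap := hS.map_eq
  have h1 : ∫ x, g (S x) ∂μ = ∫ y, g y ∂μ := by
    rw [← integral_map hS.measurable.aemeasurable (hmap ▸ hg.aestronglyMeasurable), hmap]
  have h2 : ∫ x, g (S x) * Real.log (g (S x)) ∂μ = ∫ y, g y * Real.log (g y) ∂μ := by
    rw [← integral_map (f := fun y => g y * Real.log (g y)) hS.measurable.aemeasurable
      (hmap ▸ (measurable_L hg).aestronglyMeasurable), hmap]
  simp only [Fent, h1, h2]

/-- Subadditivity of the dynamical static entropies. -/
lemma statEnt_dyn_subadd {μ : Measure X} [IsProbabilityMeasure μ] {T : X → X}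
    (hT : Measurable T) (hμ : MeasurePreserving T μ μ) {Φ : PartUnity X} (hΦ : Φ.Meas)
    (n m : ℕ) :
    statEnt μ (PartUnity.dyn T Φ (n + m))
      ≤ statEnt μ (PartUnity.dyn T Φ n) + statEnt μ (PartUnity.dyn T Φ m) := by
  rw [statEnt_eq, dyn_split T Φ n (Fent μ) m]
  have hB : ∀ b, Good (fun x => (PartUnity.dyn T Φ m).f b (T^[n] x)) := fun b =>
    ⟨(meas_dyn hΦ hT m b).comp (hT.iterate n),
      fun x => (PartUnity.dyn T Φ m).nonneg b _,
      fun x => (PartUnity.dyn T Φ m).le_one b _⟩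
  have h := ssa_pair (μ := μ) ((PartUnity.dyn T Φ n).f)
    (fun b x => (PartUnity.dyn T Φ m).f b (T^[n] x))
    (good_of_meas (meas_dyn hΦ hT n)) hB
    ((PartUnity.dyn T Φ n).sum_one)
    (fun x => (PartUnity.dyn T Φ m).sum_one (T^[n] x))
  refine le_trans h ?_
  rw [statEnt_eq, statEnt_eq]
  have h2 : ∀ b, Fent μ (fun x => (PartUnity.dyn T Φ m).f b (T^[n] x))
      = Fent μ ((PartUnity.dyn T Φ m).f b) := fun b =>
    Fent_comp (hμ.iterate n) (meas_dyn hΦ hT m b)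
  rw [Finset.sum_congr rfl fun b _ => h2 b]

/-- Nonnegativity of static entropy. -/
lemma statEnt_nonneg {μ : Measure X} [IsProbabilityMeasure μ] {Φ : PartUnity X}
    (hΦ : Φ.Meas) : 0 ≤ statEnt μ Φ := by
  rw [statEnt_eq]
  exact Finset.sum_nonneg fun i _ => Fent_nonneg (good_of_meas hΦ i)

end PU

namespace PU
open PartUnity
open scoped ENNReal NNReal
variable {X : Type*} [MeasurableSpace X]

lemma integral_condMeas {μ : Measure X} {ψ : X → ℝ} (hψm : Measurable ψ) (hψ0 : ∀ x, 0 ≤ ψ x)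
    (g : X → ℝ) :
    ∫ x, g x ∂(condMeas μ ψ)
      = (ENNReal.ofReal (∫ x, ψ x ∂μ))⁻¹.toReal * ∫ x, ψ x * g x ∂μ := by
  rw [condMeas, integral_smul_measure]
  rw [smul_eq_mul]
  congr 1
  have h0 : (fun x => ENNReal.ofReal (ψ x)) = (fun x => ((ψ x).toNNReal : ℝ≥0∞)) := rfl
  rw [h0, integral_withDensity_eq_integral_smul hψm.real_toNNReal]
  refine integral_congr_ae (ae_of_all _ fun x => ?_)
  show (ψ x).toNNReal • g x = ψ x * g x
  rw [NNReal.smul_def, Real.coe_toNNReal _ (hψ0 x), smul_eq_mul]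

lemma isProb_condMeas {μ : Measure X} [IsProbabilityMeasure μ] {ψ : X → ℝ}
    (hψm : Measurable ψ) (hψ0 : ∀ x, 0 ≤ ψ x) (hψ1 : ∀ x, ψ x ≤ 1)
    (hq : 0 < ∫ x, ψ x ∂μ) :
    IsProbabilityMeasure (condMeas μ ψ) := by
  constructor
  rw [condMeas, Measure.smul_apply]
  rw [withDensity_apply _ MeasurableSet.univ, setLIntegral_univ]
  rw [← ofReal_integral_eq_lintegral_ofReal
    (Good.integrable ⟨hψm, hψ0, hψ1⟩) (ae_of_all _ hψ0)]
  rw [smul_eq_mul]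
  exact ENNReal.inv_mul_cancel (ne_of_gt (ENNReal.ofReal_pos.mpr hq)) ENNReal.ofReal_ne_top

/-- The chain rule: conditional static entropy equals entropy of the join minus
entropy of the conditioning partition. -/
lemma condStatEnt_eq {μ : Measure X} [IsProbabilityMeasure μ] {Φ Ψ : PartUnity X}
    (hΦ : Φ.Meas) (hΨ : Ψ.Meas) :
    condStatEnt μ Φ Ψ = statEnt μ (Φ.join Ψ) - statEnt μ Ψ := by
  have hq0 : ∀ j, 0 ≤ ∫ x, Ψ.f j x ∂μ := fun j => integral_nonneg (Ψ.nonneg j)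
  have hp0 : ∀ (i : Fin Φ.n) (j : Fin Ψ.n), 0 ≤ ∫ x, Φ.f i x * Ψ.f j x ∂μ := fun i j =>
    integral_nonneg fun x => mul_nonneg (Φ.nonneg i x) (Ψ.nonneg j x)
  -- per-`j` identity
  have hterm : ∀ j, (∫ x, Ψ.f j x ∂μ) * statEnt (condMeas μ (Ψ.f j)) Φ
      = ∑ i, (-((∫ x, Φ.f i x * Ψ.f j x ∂μ) * Real.log (∫ x, Φ.f i x * Ψ.f j x ∂μ))
          + (∫ x, Φ.f i x * Ψ.f j x ∂μ) * Real.log (∫ x, Ψ.f j x ∂μ)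
          + ∫ x, Ψ.f j x * (Φ.f i x * Real.log (Φ.f i x)) ∂μ) := by
    intro j
    by_cases hq : ∫ x, Ψ.f j x ∂μ = 0
    · have hae : Ψ.f j =ᵐ[μ] 0 := by
        rw [← integral_eq_zero_iff_of_nonneg (fun x => Ψ.nonneg j x)
          (Good.integrable (good_of_meas hΨ j))]
        exact hq
      have hpz : ∀ i, ∫ x, Φ.f i x * Ψ.f j x ∂μ = 0 := by
        intro i
        have h1 : (fun x => Φ.f i x * Ψ.f j x) =ᵐ[μ] 0 := by
          filter_upwards [hae] with x hx
          simp [hx]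
        rw [integral_congr_ae h1]
        simp
      have hcz : ∀ i, ∫ x, Ψ.f j x * (Φ.f i x * Real.log (Φ.f i x)) ∂μ = 0 := by
        intro i
        have h1 : (fun x => Ψ.f j x * (Φ.f i x * Real.log (Φ.f i x))) =ᵐ[μ] 0 := by
          filter_upwards [hae] with x hx
          simp [hx]
        rw [integral_congr_ae h1]
        simp
      rw [hq, zero_mul]
      symm
      apply Finset.sum_eq_zero
      intro i _
      rw [hpz i, hcz i]
      simp
    · have hqpos : 0 < ∫ x, Ψ.f j x ∂μ := lt_of_le_of_ne (hq0 j) (Ne.symm hq)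
      have hInt : ∀ g : X → ℝ, ∫ x, g x ∂(condMeas μ (Ψ.f j))
          = (∫ x, Ψ.f j x ∂μ)⁻¹ * ∫ x, Ψ.f j x * g x ∂μ := by
        intro g
        rw [integral_condMeas (hΨ j) (Ψ.nonneg j) g, ENNReal.toReal_inv,
          ENNReal.toReal_ofReal (hq0 j)]
      have hcomm : ∀ i, ∫ x, Ψ.f j x * Φ.f i x ∂μ = ∫ x, Φ.f i x * Ψ.f j x ∂μ := fun i =>
        integral_congr_ae (ae_of_all _ fun x => mul_comm _ _)
      have hF : ∀ i, Fent (condMeas μ (Ψ.f j)) (Φ.f i)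
          = -(((∫ x, Ψ.f j x ∂μ)⁻¹ * ∫ x, Φ.f i x * Ψ.f j x ∂μ)
              * Real.log ((∫ x, Ψ.f j x ∂μ)⁻¹ * ∫ x, Φ.f i x * Ψ.f j x ∂μ))
            + (∫ x, Ψ.f j x ∂μ)⁻¹ * ∫ x, Ψ.f j x * (Φ.f i x * Real.log (Φ.f i x)) ∂μ := by
        intro i
        rw [Fent, hInt (Φ.f i), hInt (fun x => Φ.f i x * Real.log (Φ.f i x)), hcomm i]
      rw [statEnt_eq, Finset.mul_sum, Finset.sum_congr rfl fun i _ => congrArg _ (hF i)]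
      apply Finset.sum_congr rfl
      intro i _
      set q := ∫ x, Ψ.f j x ∂μ with hqdef
      set p := ∫ x, Φ.f i x * Ψ.f j x ∂μ with hpdef
      set c := ∫ x, Ψ.f j x * (Φ.f i x * Real.log (Φ.f i x)) ∂μ with hcdef
      have hple : 0 ≤ p := hp0 i j
      rcases eq_or_lt_of_le hple with hp | hp
      · rw [← hp]
        simp
        field_simp
      · rw [mul_add]
        have h1 : q * (q⁻¹ * c) = c := by field_simp
        have h2 : q * -((q⁻¹ * p) * Real.log (q⁻¹ * p)) = -(p * Real.log p) + p * Real.log q := by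
          rw [show q⁻¹ * p = p / q by ring, Real.log_div (ne_of_gt hp) (ne_of_gt hqpos)]
          field_simp
          ring
        rw [h1, h2]
  -- sum the identity over `j`
  have LHSe : condStatEnt μ Φ Ψ
      = ∑ j, ∑ i, (-((∫ x, Φ.f i x * Ψ.f j x ∂μ) * Real.log (∫ x, Φ.f i x * Ψ.f j x ∂μ))
          + (∫ x, Φ.f i x * Ψ.f j x ∂μ) * Real.log (∫ x, Ψ.f j x ∂μ)
          + ∫ x, Ψ.f j x * (Φ.f i x * Real.log (Φ.f i x)) ∂μ) :=
    Finset.sum_congr rfl fun j _ => hterm j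
  -- marginals
  have hM1 : ∀ j, ∑ i, ∫ x, Φ.f i x * Ψ.f j x ∂μ = ∫ x, Ψ.f j x ∂μ := fun j =>
    sum_int_absorb (good_of_meas hΦ) Φ.sum_one (hΨ j) (good_of_meas hΨ j).abs_le
  have hM2 : ∀ j, ∑ i, ∫ x, Φ.f i x * (Ψ.f j x * Real.log (Ψ.f j x)) ∂μ
      = ∫ x, Ψ.f j x * Real.log (Ψ.f j x) ∂μ := fun j =>
    sum_int_absorb (good_of_meas hΦ) Φ.sum_one (measurable_L (hΨ j))
      (abs_L_le (good_of_meas hΨ j))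
  -- expand the right-hand side
  have RHS1 : statEnt μ (Φ.join Ψ)
      = ∑ i, ∑ j, (-((∫ x, Φ.f i x * Ψ.f j x ∂μ) * Real.log (∫ x, Φ.f i x * Ψ.f j x ∂μ))
          + ((∫ x, Ψ.f j x * (Φ.f i x * Real.log (Φ.f i x)) ∂μ)
             + ∫ x, Φ.f i x * (Ψ.f j x * Real.log (Ψ.f j x)) ∂μ)) := by
    rw [statEnt_eq, sum_join (Fent μ) Φ Ψ]
    exact Finset.sum_congr rfl fun i _ => Finset.sum_congr rfl fun j _ =>
      Fent_pair (good_of_meas hΦ i) (good_of_meas hΨ j)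
  have RHS2 : statEnt μ Ψ
      = ∑ j, (-((∫ x, Ψ.f j x ∂μ) * Real.log (∫ x, Ψ.f j x ∂μ))
          + ∫ x, Ψ.f j x * Real.log (Ψ.f j x) ∂μ) := statEnt_eq μ Ψ
  rw [LHSe, RHS1, RHS2]
  simp only [Finset.sum_add_distrib, Finset.sum_neg_distrib]
  -- remaining pieces
  have hB : ∑ j, ∑ i, (∫ x, Φ.f i x * Ψ.f j x ∂μ) * Real.log (∫ x, Ψ.f j x ∂μ)
      = ∑ j, (∫ x, Ψ.f j x ∂μ) * Real.log (∫ x, Ψ.f j x ∂μ) := by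
    apply Finset.sum_congr rfl; intro j _
    rw [← Finset.sum_mul, hM1 j]
  have hswap1 : ∑ j, ∑ i, (∫ x, Φ.f i x * Ψ.f j x ∂μ)
        * Real.log (∫ x, Φ.f i x * Ψ.f j x ∂μ)
      = ∑ i, ∑ j, (∫ x, Φ.f i x * Ψ.f j x ∂μ)
        * Real.log (∫ x, Φ.f i x * Ψ.f j x ∂μ) :=
    Finset.sum_comm
  have hswap2 : ∑ j, ∑ i, ∫ x, Ψ.f j x * (Φ.f i x * Real.log (Φ.f i x)) ∂μ
      = ∑ i, ∑ j, ∫ x, Ψ.f j x * (Φ.f i x * Real.log (Φ.f i x)) ∂μ :=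
    Finset.sum_comm
  have hM2' : ∑ i, ∑ j, ∫ x, Φ.f i x * (Ψ.f j x * Real.log (Ψ.f j x)) ∂μ
      = ∑ j, ∫ x, Ψ.f j x * Real.log (Ψ.f j x) ∂μ := by
    rw [Finset.sum_comm (f := fun (i : Fin Φ.n) (j : Fin Ψ.n) =>
      ∫ x, Φ.f i x * (Ψ.f j x * Real.log (Ψ.f j x)) ∂μ)]
    exact Finset.sum_congr rfl fun j _ => hM2 j
  linarith
end PU

namespace PU
open PartUnity

variable {X : Type*} [MeasurableSpace X]

lemma condStatEnt_nonneg {μ : Measure X} [IsProbabilityMeasure μ] {Φ Ψ : PartUnity X}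
    (hΦ : Φ.Meas) (hΨ : Ψ.Meas) : 0 ≤ condStatEnt μ Φ Ψ := by
  show 0 ≤ ∑ j, (∫ x, Ψ.f j x ∂μ) * statEnt (condMeas μ (Ψ.f j)) Φ
  refine Finset.sum_nonneg fun j _ => ?_
  have hq0 : 0 ≤ ∫ x, Ψ.f j x ∂μ := integral_nonneg (Ψ.nonneg j)
  rcases eq_or_lt_of_le hq0 with h | h
  · rw [← h, zero_mul]
  · haveI := isProb_condMeas (hΨ j) (Ψ.nonneg j) (Ψ.le_one j) h
    exact mul_nonneg hq0 (statEnt_nonneg hΦ)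

set_option maxHeartbeats 1600000 in
/-- Subadditivity of conditional dynamical entropies. -/
lemma condStatEnt_dyn_subadd {μ : Measure X} [IsProbabilityMeasure μ] {T : X → X}
    (hT : Measurable T) (hμ : MeasurePreserving T μ μ) {Φ Ψ : PartUnity X}
    (hΦ : Φ.Meas) (hΨ : Ψ.Meas) (n m : ℕ) :
    condStatEnt μ (PartUnity.dyn T Φ (n + m)) (PartUnity.dyn T Ψ (n + m))
      ≤ condStatEnt μ (PartUnity.dyn T Φ n) (PartUnity.dyn T Ψ n)
        + condStatEnt μ (PartUnity.dyn T Φ m) (PartUnity.dyn T Ψ m) := by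
  rw [condStatEnt_eq (meas_dyn hΦ hT (n+m)) (meas_dyn hΨ hT (n+m)),
    condStatEnt_eq (meas_dyn hΦ hT n) (meas_dyn hΨ hT n),
    condStatEnt_eq (meas_dyn hΦ hT m) (meas_dyn hΨ hT m)]
  set A := PartUnity.dyn T Φ n with hAdef
  set B := PartUnity.dyn T Φ m with hBdef
  set C := PartUnity.dyn T Ψ n with hCdef
  set D := PartUnity.dyn T Ψ m with hDdef
  have hAm : A.Meas := meas_dyn hΦ hT n
  have hBm : B.Meas := meas_dyn hΦ hT m
  have hCm : C.Meas := meas_dyn hΨ hT n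
  have hDm : D.Meas := meas_dyn hΨ hT m
  have hAg : ∀ i, Good (A.f i) := good_of_meas hAm
  have hCg : ∀ c, Good (C.f c) := good_of_meas hCm
  have hB'g : ∀ b, Good (fun x => B.f b (T^[n] x)) := fun b =>
    ⟨(hBm b).comp (hT.iterate n), fun x => B.nonneg b _, fun x => B.le_one b _⟩
  have hD'g : ∀ d, Good (fun x => D.f d (T^[n] x)) := fun d =>
    ⟨(hDm d).comp (hT.iterate n), fun x => D.nonneg d _, fun x => D.le_one d _⟩
  have hγg : ∀ t : Fin C.n × Fin D.n, Good (fun x => C.f t.1 x * D.f t.2 (T^[n] x)) :=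
    fun t => (hCg t.1).mul (hD'g t.2)
  have hB's : ∀ x, ∑ b, B.f b (T^[n] x) = 1 := fun x => B.sum_one _
  have hD's : ∀ x, ∑ d, D.f d (T^[n] x) = 1 := fun x => D.sum_one _
  have hγs : ∀ x, ∑ t : Fin C.n × Fin D.n, C.f t.1 x * D.f t.2 (T^[n] x) = 1 := by
    intro x
    rw [Fintype.sum_prod_type]
    have h1 : ∀ c, ∑ d, C.f c x * D.f d (T^[n] x) = C.f c x := by
      intro c
      rw [← Finset.mul_sum, hD's x, mul_one]
    rw [Finset.sum_congr rfl fun c _ => h1 c]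
    exact C.sum_one x
  -- the three strong-subadditivity steps
  have h0α := ssa (μ := μ) A.f (fun t : Fin C.n × Fin D.n => fun x => C.f t.1 x * D.f t.2 (T^[n] x))
      (fun b x => B.f b (T^[n] x)) hAg hγg hB'g A.sum_one hγs hB's
  have hstepα :  (∑ i, ∑ t : Fin C.n × Fin D.n, ∑ b, Fent μ (fun x =>
        A.f i x * (C.f t.1 x * D.f t.2 (T^[n] x)) * B.f b (T^[n] x)))
        + ∑ t : Fin C.n × Fin D.n, Fent μ (fun x => C.f t.1 x * D.f t.2 (T^[n] x))
      ≤ (∑ i, ∑ t : Fin C.n × Fin D.n, Fent μ (fun x =>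
          A.f i x * (C.f t.1 x * D.f t.2 (T^[n] x))))
        + ∑ t : Fin C.n × Fin D.n, ∑ b, Fent μ (fun x =>
          (C.f t.1 x * D.f t.2 (T^[n] x)) * B.f b (T^[n] x)) := h0α
  have h0β := ssa (μ := μ) A.f C.f (fun d x => D.f d (T^[n] x)) hAg hCg hD'g A.sum_one C.sum_one hD's
  have hstepβ :  (∑ i, ∑ c, ∑ d, Fent μ (fun x => A.f i x * C.f c x * D.f d (T^[n] x)))
        + ∑ c, Fent μ (C.f c)
      ≤ (∑ i, ∑ c, Fent μ (fun x => A.f i x * C.f c x))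
        + ∑ c, ∑ d, Fent μ (fun x => C.f c x * D.f d (T^[n] x)) := h0β
  have h0γ := ssa (μ := μ) (fun b x => B.f b (T^[n] x)) (fun d x => D.f d (T^[n] x)) C.f
      hB'g hD'g hCg hB's hD's C.sum_one
  have hstepγ :  (∑ b, ∑ d, ∑ c, Fent μ (fun x =>
        B.f b (T^[n] x) * D.f d (T^[n] x) * C.f c x))
        + ∑ d, Fent μ (fun x => D.f d (T^[n] x))
      ≤ (∑ b, ∑ d, Fent μ (fun x => B.f b (T^[n] x) * D.f d (T^[n] x)))
        + ∑ d, ∑ c, Fent μ (fun x => D.f d (T^[n] x) * C.f c x) := h0γ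
  -- identifications
  have E2 : statEnt μ (PartUnity.dyn T Ψ (n + m))
      = ∑ c, ∑ d, Fent μ (fun x => C.f c x * D.f d (T^[n] x)) := by
    rw [statEnt_eq]
    exact dyn_split T Ψ n (Fent μ) m
  have E2prod : ∑ t : Fin C.n × Fin D.n, Fent μ (fun x => C.f t.1 x * D.f t.2 (T^[n] x))
      = ∑ c, ∑ d, Fent μ (fun x => C.f c x * D.f d (T^[n] x)) :=
    Fintype.sum_prod_type _
  have E1 : statEnt μ ((PartUnity.dyn T Φ (n + m)).join (PartUnity.dyn T Ψ (n + m)))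
      = ∑ i, ∑ t : Fin C.n × Fin D.n, ∑ b, Fent μ (fun x =>
          A.f i x * (C.f t.1 x * D.f t.2 (T^[n] x)) * B.f b (T^[n] x)) := by
    calc statEnt μ ((PartUnity.dyn T Φ (n + m)).join (PartUnity.dyn T Ψ (n + m)))
        = ∑ k, ∑ l, Fent μ (fun x => (PartUnity.dyn T Φ (n + m)).f k x
            * (PartUnity.dyn T Ψ (n + m)).f l x) := by
          rw [statEnt_eq]
          exact sum_join (Fent μ) _ _
      _ = ∑ i, ∑ b, ∑ l, Fent μ (fun x => (A.f i x * B.f b (T^[n] x))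
            * (PartUnity.dyn T Ψ (n + m)).f l x) :=
          dyn_split T Φ n (fun g => ∑ l, Fent μ (fun x =>
            g x * (PartUnity.dyn T Ψ (n + m)).f l x)) m
      _ = ∑ i, ∑ b, ∑ c, ∑ d, Fent μ (fun x => (A.f i x * B.f b (T^[n] x))
            * (C.f c x * D.f d (T^[n] x))) :=
          Finset.sum_congr rfl fun i _ => Finset.sum_congr rfl fun b _ =>
            dyn_split T Ψ n (fun g => Fent μ (fun x =>
              (A.f i x * B.f b (T^[n] x)) * g x)) m
      _ = ∑ i, ∑ c, ∑ b, ∑ d, Fent μ (fun x => (A.f i x * B.f b (T^[n] x))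
            * (C.f c x * D.f d (T^[n] x))) :=
          Finset.sum_congr rfl fun i _ => Finset.sum_comm
      _ = ∑ i, ∑ c, ∑ d, ∑ b, Fent μ (fun x => (A.f i x * B.f b (T^[n] x))
            * (C.f c x * D.f d (T^[n] x))) :=
          Finset.sum_congr rfl fun i _ => Finset.sum_congr rfl fun c _ => Finset.sum_comm
      _ = ∑ i, ∑ c, ∑ d, ∑ b, Fent μ (fun x =>
            A.f i x * (C.f c x * D.f d (T^[n] x)) * B.f b (T^[n] x)) :=
          Finset.sum_congr rfl fun i _ => Finset.sum_congr rfl fun c _ =>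
            Finset.sum_congr rfl fun d _ => Finset.sum_congr rfl fun b _ =>
              congrArg (Fent μ) (funext fun x => by ring)
      _ = ∑ i, ∑ t : Fin C.n × Fin D.n, ∑ b, Fent μ (fun x =>
            A.f i x * (C.f t.1 x * D.f t.2 (T^[n] x)) * B.f b (T^[n] x)) :=
          Finset.sum_congr rfl fun i _ =>
            (Fintype.sum_prod_type (fun t : Fin C.n × Fin D.n => ∑ b, Fent μ (fun x =>
              A.f i x * (C.f t.1 x * D.f t.2 (T^[n] x)) * B.f b (T^[n] x)))).symm
  have E3 : ∑ i, ∑ t : Fin C.n × Fin D.n, Fent μ (fun x =>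
        A.f i x * (C.f t.1 x * D.f t.2 (T^[n] x)))
      = ∑ i, ∑ c, ∑ d, Fent μ (fun x => A.f i x * C.f c x * D.f d (T^[n] x)) := by
    apply Finset.sum_congr rfl; intro i _
    rw [Fintype.sum_prod_type]
    exact Finset.sum_congr rfl fun c _ => Finset.sum_congr rfl fun d _ =>
      congrArg (Fent μ) (funext fun x => by ring)
  have E4 : ∑ t : Fin C.n × Fin D.n, ∑ b, Fent μ (fun x =>
        (C.f t.1 x * D.f t.2 (T^[n] x)) * B.f b (T^[n] x))
      = ∑ b, ∑ d, ∑ c, Fent μ (fun x =>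
          B.f b (T^[n] x) * D.f d (T^[n] x) * C.f c x) := by
    rw [Fintype.sum_prod_type]
    calc ∑ c, ∑ d, ∑ b, Fent μ (fun x =>
            (C.f c x * D.f d (T^[n] x)) * B.f b (T^[n] x))
        = ∑ c, ∑ b, ∑ d, Fent μ (fun x =>
            (C.f c x * D.f d (T^[n] x)) * B.f b (T^[n] x)) :=
          Finset.sum_congr rfl fun c _ => Finset.sum_comm
      _ = ∑ b, ∑ c, ∑ d, Fent μ (fun x =>
            (C.f c x * D.f d (T^[n] x)) * B.f b (T^[n] x)) := Finset.sum_comm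
      _ = ∑ b, ∑ d, ∑ c, Fent μ (fun x =>
            (C.f c x * D.f d (T^[n] x)) * B.f b (T^[n] x)) :=
          Finset.sum_congr rfl fun b _ => Finset.sum_comm
      _ = ∑ b, ∑ d, ∑ c, Fent μ (fun x =>
            B.f b (T^[n] x) * D.f d (T^[n] x) * C.f c x) :=
          Finset.sum_congr rfl fun b _ => Finset.sum_congr rfl fun d _ =>
            Finset.sum_congr rfl fun c _ => congrArg (Fent μ) (funext fun x => by ring)
  have E5 : ∑ d, Fent μ (fun x => D.f d (T^[n] x)) = statEnt μ D := by
    have h1 : ∀ d, Fent μ (fun x => D.f d (T^[n] x)) = Fent μ (D.f d) := fun d =>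
      Fent_comp (hμ.iterate n) (hDm d)
    rw [Finset.sum_congr rfl fun d _ => h1 d, statEnt_eq]
  have E6 : ∑ b, ∑ d, Fent μ (fun x => B.f b (T^[n] x) * D.f d (T^[n] x))
      = statEnt μ (B.join D) := by
    have h1 : ∀ b d, Fent μ (fun x => B.f b (T^[n] x) * D.f d (T^[n] x))
        = Fent μ (fun x => B.f b x * D.f d x) := fun b d =>
      Fent_comp (hμ.iterate n) ((hBm b).mul (hDm d))
    rw [Finset.sum_congr rfl fun b _ => Finset.sum_congr rfl fun d _ => h1 b d,
      statEnt_eq, sum_join (Fent μ) B D]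
  have E7 : ∑ d, ∑ c, Fent μ (fun x => D.f d (T^[n] x) * C.f c x)
      = ∑ c, ∑ d, Fent μ (fun x => C.f c x * D.f d (T^[n] x)) := by
    rw [Finset.sum_comm (f := fun d c => Fent μ (fun x => D.f d (T^[n] x) * C.f c x))]
    exact Finset.sum_congr rfl fun c _ => Finset.sum_congr rfl fun d _ =>
      congrArg (Fent μ) (funext fun x => by ring)
  have E8 : ∑ i, ∑ c, Fent μ (fun x => A.f i x * C.f c x) = statEnt μ (A.join C) := by
    rw [statEnt_eq, sum_join (Fent μ) A C]
  have E9 : ∑ c, Fent μ (C.f c) = statEnt μ C := (statEnt_eq μ C).symm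
  linarith [hstepα, hstepβ, hstepγ, E1, E2, E2prod, E3, E4, E5, E6, E7, E8, E9]

end PU
end EntSub
/-- Subadditivity of the (conditional) static entropies along the
dynamical joins, and existence of the limits defining `h̃_μ(T,Φ)` and `h̃_μ(T,Φ|Ψ)`. -/
theorem statEnt_subadditive_and_limits_exist {X : Type*} [MetricSpace X] [CompactSpace X] [Nonempty X]
    [MeasurableSpace X] [BorelSpace X]
    (T : X → X) (hT : Continuous T) (hTsurj : Function.Surjective T)
    (μ : Measure X) [IsProbabilityMeasure μ] (hμ : MeasurePreserving T μ μ)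
    (Φ Ψ : PartUnity X) (hΦ : Φ.Meas) (hΨ : Ψ.Meas) :
    (∀ n m : ℕ, 1 ≤ n → 1 ≤ m →
      statEnt μ (PartUnity.dyn T Φ (n + m)) ≤
        statEnt μ (PartUnity.dyn T Φ n) + statEnt μ (PartUnity.dyn T Φ m)) ∧
    (∀ n m : ℕ, 1 ≤ n → 1 ≤ m →
      condStatEnt μ (PartUnity.dyn T Φ (n + m)) (PartUnity.dyn T Ψ (n + m)) ≤
        condStatEnt μ (PartUnity.dyn T Φ n) (PartUnity.dyn T Ψ n) +
          condStatEnt μ (PartUnity.dyn T Φ m) (PartUnity.dyn T Ψ m)) ∧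
    (∃ L : ℝ, Filter.Tendsto
      (fun n : ℕ => statEnt μ (PartUnity.dyn T Φ n) / (n : ℝ)) Filter.atTop (nhds L)) ∧
    (∃ L : ℝ, Filter.Tendsto
      (fun n : ℕ => condStatEnt μ (PartUnity.dyn T Φ n) (PartUnity.dyn T Ψ n) / (n : ℝ))
      Filter.atTop (nhds L)) := by
  have hTm : Measurable T := hT.measurable
  refine ⟨fun n m _ _ => EntSub.PU.statEnt_dyn_subadd hTm hμ hΦ n m,
          fun n m _ _ => EntSub.PU.condStatEnt_dyn_subadd hTm hμ hΦ hΨ n m, ?_, ?_⟩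
  · have hsub : Subadditive (fun n => statEnt μ (PartUnity.dyn T Φ n)) := fun a b =>
      EntSub.PU.statEnt_dyn_subadd hTm hμ hΦ a b
    have hbdd : BddBelow (Set.range fun n : ℕ => statEnt μ (PartUnity.dyn T Φ n) / (n : ℝ)) := by
      refine ⟨0, ?_⟩
      rintro x ⟨n, rfl⟩
      exact div_nonneg (EntSub.PU.statEnt_nonneg (EntSub.PU.meas_dyn hΦ hTm n))
        (Nat.cast_nonneg n)
    exact ⟨hsub.lim, hsub.tendsto_lim hbdd⟩
  · have hsub : Subadditive (fun n =>
        condStatEnt μ (PartUnity.dyn T Φ n) (PartUnity.dyn T Ψ n)) := fun a b =>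
      EntSub.PU.condStatEnt_dyn_subadd hTm hμ hΦ hΨ a b
    have hbdd : BddBelow (Set.range fun n : ℕ =>
        condStatEnt μ (PartUnity.dyn T Φ n) (PartUnity.dyn T Ψ n) / (n : ℝ)) := by
      refine ⟨0, ?_⟩
      rintro x ⟨n, rfl⟩
      exact div_nonneg (EntSub.PU.condStatEnt_nonneg (EntSub.PU.meas_dyn hΦ hTm n)
        (EntSub.PU.meas_dyn hΨ hTm n)) (Nat.cast_nonneg n)
    exact ⟨hsub.lim, hsub.tendsto_lim hbdd⟩
end

section
/- Let (X,T) be a topological dynamical system. For every T-invariant Borel probability measure μ on X and every continuous partition of unity Φ on X, H̃_μ(Φ) ≤ log H̃(Φ). As a consequence, h̃_μ(T,Φ) ≤ h̃(T,Φ) and h̃_μ(T) ≤ h̃_top(T). -/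
open MeasureTheory Filter Set

/-! ### Metric entropy via partitions of unity -/

variable {X Y : Type*}

section Aux

open MeasureTheory PartUnity

variable {Z : Type*} [MetricSpace Z] [CompactSpace Z] [Nonempty Z]
  [MeasurableSpace Z] [BorelSpace Z]

private lemma aux_integ (μ : Measure Z) [IsFiniteMeasure μ] {f : Z → ℝ} (hf : Continuous f) :
    Integrable f μ :=
  hf.integrable_of_hasCompactSupport (HasCompactSupport.of_compactSpace f)

private lemma aux_bdd {f : Z → ℝ} (h : ∀ x, f x ≤ 1) : BddAbove (Set.range f) :=
  ⟨1, by rintro _ ⟨x, rfl⟩; exact h x⟩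

private lemma aux_statEnt_le (μ : Measure Z) [IsProbabilityMeasure μ]
    (Φ : PartUnity Z) (hΦ : Φ.Cont) : statEnt μ Φ ≤ Real.log (topStat Φ) := by
  classical
  obtain ⟨x₀⟩ := (inferInstance : Nonempty Z)
  set a : Fin Φ.n → ℝ := fun i => ∫ x, Φ.f i x ∂μ with ha
  set s : Fin Φ.n → ℝ := fun i => ⨆ x, Φ.f i x with hs
  have hfs : ∀ i x, Φ.f i x ≤ s i := fun i x => le_ciSup (aux_bdd (Φ.le_one i)) x
  have hs0 : ∀ i, 0 ≤ s i := fun i => (Φ.nonneg i x₀).trans (hfs i x₀)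
  have ha0 : ∀ i, 0 ≤ a i := fun i => integral_nonneg (Φ.nonneg i)
  have hinteg : ∀ i, Integrable (Φ.f i) μ := fun i => aux_integ μ (hΦ i)
  have has : ∀ i, a i ≤ s i := by
    intro i
    calc a i ≤ ∫ _, s i ∂μ := integral_mono (hinteg i) (integrable_const _) (hfs i)
    _ = s i := by simp
  have hsum : ∑ i, a i = 1 := by
    rw [ha]
    rw [← integral_finset_sum _ (fun i _ => hinteg i)]
    simp [Φ.sum_one]
  set S := topStat Φ with hS
  have hSsum : S = ∑ i, s i := rfl
  have hS1 : (1:ℝ) ≤ S := by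
    rw [hSsum]
    calc (1:ℝ) = ∑ i, Φ.f i x₀ := (Φ.sum_one x₀).symm
    _ ≤ ∑ i, s i := Finset.sum_le_sum fun i _ => hfs i x₀
  have hSpos : (0:ℝ) < S := lt_of_lt_of_le one_pos hS1
  have hterm : ∀ i, (∫ x, Φ.f i x * Real.log (Φ.f i x) ∂μ) ≤ a i * Real.log (s i) := by
    intro i
    have hpt : ∀ x, Φ.f i x * Real.log (Φ.f i x) ≤ Φ.f i x * Real.log (s i) := by
      intro x
      rcases eq_or_lt_of_le (Φ.nonneg i x) with h | h
      · rw [← h]; simp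
      · exact mul_le_mul_of_nonneg_left
          (Real.log_le_log h (hfs i x)) h.le
    calc (∫ x, Φ.f i x * Real.log (Φ.f i x) ∂μ)
        ≤ ∫ x, Φ.f i x * Real.log (s i) ∂μ :=
          integral_mono (aux_integ μ ((Real.continuous_mul_log).comp (hΦ i)))
            ((hinteg i).mul_const _) hpt
      _ = a i * Real.log (s i) := integral_mul_const _ _
  have hgibbs : ∀ i, a i * (Real.log (s i) - Real.log (a i))
      ≤ s i / S - a i + a i * Real.log S := by
    intro i
    rcases eq_or_lt_of_le (ha0 i) with h | h
    · rw [← h]; simp [div_nonneg (hs0 i) hSpos.le]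
    · have hsipos : 0 < s i := lt_of_lt_of_le h (has i)
      have ht : 0 < s i / (a i * S) := div_pos hsipos (mul_pos h hSpos)
      have hlog := Real.log_le_sub_one_of_pos ht
      have hrw : Real.log (s i / (a i * S))
          = Real.log (s i) - Real.log (a i) - Real.log S := by
        rw [Real.log_div hsipos.ne' (mul_pos h hSpos).ne', Real.log_mul h.ne' hSpos.ne']
        ring
      rw [hrw] at hlog
      have h2 := mul_le_mul_of_nonneg_left hlog h.le
      have h3 : a i * (s i / (a i * S) - 1) = s i / S - a i := by
        field_simp
      have h4 : a i * (Real.log (s i) - Real.log (a i) - Real.log S)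
          = a i * (Real.log (s i) - Real.log (a i)) - a i * Real.log S := by ring
      linarith
  have hstat : statEnt μ Φ
      = ∑ i, (-(a i * Real.log (a i)) + ∫ x, Φ.f i x * Real.log (Φ.f i x) ∂μ) := rfl
  calc statEnt μ Φ
      = ∑ i, (-(a i * Real.log (a i)) + ∫ x, Φ.f i x * Real.log (Φ.f i x) ∂μ) := hstat
    _ ≤ ∑ i, a i * (Real.log (s i) - Real.log (a i)) := by
        apply Finset.sum_le_sum
        intro i _
        have := hterm i
        nlinarith [hterm i]
    _ ≤ ∑ i, (s i / S - a i + a i * Real.log S) := Finset.sum_le_sum fun i _ => hgibbs i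
    _ = Real.log S := by
        rw [Finset.sum_add_distrib, Finset.sum_sub_distrib, ← Finset.sum_div,
          ← Finset.sum_mul, hsum, ← hSsum, div_self hSpos.ne']
        ring

private lemma aux_statEnt_nonneg (μ : Measure Z) [IsProbabilityMeasure μ]
    (Φ : PartUnity Z) (hΦ : Φ.Cont) : 0 ≤ statEnt μ Φ := by
  have key : ∀ i : Fin Φ.n, (∫ x, Φ.f i x ∂μ) * Real.log (∫ x, Φ.f i x ∂μ)
      ≤ ∫ x, Φ.f i x * Real.log (Φ.f i x) ∂μ := by
    intro i
    set a := ∫ x, Φ.f i x ∂μ with ha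
    have hinteg : Integrable (Φ.f i) μ := aux_integ μ (hΦ i)
    have hmli : Integrable (fun x => Φ.f i x * Real.log (Φ.f i x)) μ :=
      aux_integ μ ((Real.continuous_mul_log).comp (hΦ i))
    rcases eq_or_lt_of_le (show (0:ℝ) ≤ a from integral_nonneg (Φ.nonneg i)) with h | h
    · have hzero : Φ.f i =ᵐ[μ] 0 := by
        refine (integral_eq_zero_iff_of_nonneg (Φ.nonneg i) hinteg).mp ?_
        rw [← ha]; exact h.symm
      have hz2 : (fun x => Φ.f i x * Real.log (Φ.f i x)) =ᵐ[μ] 0 := by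
        filter_upwards [hzero] with x hx
        simp only [Pi.zero_apply] at hx ⊢
        simp [hx]
      rw [integral_congr_ae hz2, ← h]
      simp
    · have hpt : ∀ x, Φ.f i x * Real.log a + Φ.f i x - a ≤ Φ.f i x * Real.log (Φ.f i x) := by
        intro x
        rcases eq_or_lt_of_le (Φ.nonneg i x) with hx | hx
        · rw [← hx]; simp; linarith
        · have hd : 0 < a / Φ.f i x := div_pos h hx
          have hlog := Real.log_le_sub_one_of_pos hd
          rw [Real.log_div h.ne' hx.ne'] at hlog
          have h2 := mul_le_mul_of_nonneg_left hlog hx.le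
          have h3 : Φ.f i x * (a / Φ.f i x - 1) = a - Φ.f i x := by field_simp
          have h4 : Φ.f i x * (Real.log a - Real.log (Φ.f i x))
              = Φ.f i x * Real.log a - Φ.f i x * Real.log (Φ.f i x) := by ring
          linarith
      have hintc : Integrable (fun x => Φ.f i x * Real.log a) μ := hinteg.mul_const _
      have hint1 : Integrable (fun x => Φ.f i x * Real.log a + Φ.f i x) μ := by
        exact hintc.add hinteg
      have hint2 : Integrable (fun x => Φ.f i x * Real.log a + Φ.f i x - a) μ := by
        exact hint1.sub (integrable_const _)
      calc a * Real.log a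
          = ∫ x, (Φ.f i x * Real.log a + Φ.f i x - a) ∂μ := by
            rw [integral_sub hint1 (integrable_const _), integral_add hintc hinteg,
              integral_mul_const, integral_const]
            rw [← ha]
            simp [measure_univ]
        _ ≤ _ := integral_mono hint2 hmli hpt
  unfold statEnt
  apply Finset.sum_nonneg
  intro i _
  have := key i
  linarith

private lemma aux_topStat_one_le (Φ : PartUnity Z) : (1:ℝ) ≤ topStat Φ := by
  obtain ⟨x₀⟩ := (inferInstance : Nonempty Z)
  calc (1:ℝ) = ∑ i, Φ.f i x₀ := (Φ.sum_one x₀).symm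
    _ ≤ ∑ i, ⨆ x, Φ.f i x :=
      Finset.sum_le_sum fun i _ => le_ciSup (aux_bdd (Φ.le_one i)) x₀

private lemma aux_topStat_comp_le (T : Z → Z) (Φ : PartUnity Z) :
    topStat (Φ.comp T) ≤ topStat Φ := by
  apply Finset.sum_le_sum
  intro i _
  exact ciSup_le fun y => le_ciSup (aux_bdd (Φ.le_one i)) (T y)

private lemma aux_topStat_join_le (Φ Ψ : PartUnity Z) :
    topStat (Φ.join Ψ) ≤ topStat Φ * topStat Ψ := by
  obtain ⟨x₀⟩ := (inferInstance : Nonempty Z)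
  calc topStat (Φ.join Ψ)
      = ∑ p : Fin Φ.n × Fin Ψ.n, ⨆ x, (Φ.join Ψ).f (finProdFinEquiv p) x :=
        (Equiv.sum_comp finProdFinEquiv _).symm
    _ = ∑ i, ∑ j, ⨆ x, (Φ.join Ψ).f (finProdFinEquiv (i, j)) x := Fintype.sum_prod_type _
    _ ≤ ∑ i, ∑ j, (⨆ x, Φ.f i x) * (⨆ x, Ψ.f j x) := by
        apply Finset.sum_le_sum
        intro i _
        apply Finset.sum_le_sum
        intro j _
        have hji : ∀ x, (Φ.join Ψ).f (finProdFinEquiv (i, j)) x = Φ.f i x * Ψ.f j x := by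
          intro x
          show Φ.f (finProdFinEquiv.symm (finProdFinEquiv (i, j))).1 x *
            Ψ.f (finProdFinEquiv.symm (finProdFinEquiv (i, j))).2 x = _
          rw [Equiv.symm_apply_apply]
        simp only [hji]
        apply ciSup_le
        intro x
        exact mul_le_mul (le_ciSup (aux_bdd (Φ.le_one i)) x) (le_ciSup (aux_bdd (Ψ.le_one j)) x)
          (Ψ.nonneg j x) ((Φ.nonneg i x₀).trans (le_ciSup (aux_bdd (Φ.le_one i)) x₀))
    _ = topStat Φ * topStat Ψ := by
        simp only [topStat]
        rw [Finset.sum_mul_sum]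

private lemma aux_topStat_dyn_le (T : Z → Z) (Φ : PartUnity Z) (n : ℕ) :
    topStat (PartUnity.dyn T Φ n) ≤ (topStat Φ) ^ n := by
  induction n with
  | zero =>
    simp [topStat, PartUnity.dyn, PartUnity.triv, ciSup_const]
    exact (Finset.card_univ.trans (Fintype.card_fin _)).le
  | succ n ih =>
    have h0 : (0:ℝ) ≤ topStat Φ := le_trans zero_le_one (aux_topStat_one_le Φ)
    calc topStat (PartUnity.dyn T Φ (n+1))
        = topStat (Φ.join ((PartUnity.dyn T Φ n).comp T)) := rfl
      _ ≤ topStat Φ * topStat ((PartUnity.dyn T Φ n).comp T) := aux_topStat_join_le _ _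
      _ ≤ topStat Φ * topStat (PartUnity.dyn T Φ n) :=
          mul_le_mul_of_nonneg_left (aux_topStat_comp_le _ _) h0
      _ ≤ topStat Φ * (topStat Φ) ^ n := mul_le_mul_of_nonneg_left ih h0
      _ = (topStat Φ) ^ (n+1) := by ring

private lemma aux_dyn_cont (T : Z → Z) (hT : Continuous T) (Φ : PartUnity Z) (hΦ : Φ.Cont) :
    ∀ n, (PartUnity.dyn T Φ n).Cont := by
  intro n
  induction n with
  | zero => exact fun i => continuous_const
  | succ n ih =>
    intro i
    exact (hΦ _).mul ((ih _).comp hT)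

private lemma aux_loc_le (T : Z → Z) (hT : Continuous T)
    (μ : Measure Z) [IsProbabilityMeasure μ]
    (Φ : PartUnity Z) (hΦ : Φ.Cont) : locEnt T μ Φ ≤ topLocEnt T Φ := by
  have hc : ∀ n, (PartUnity.dyn T Φ n).Cont := aux_dyn_cont T hT Φ hΦ
  have h1 : ∀ n : ℕ, statEnt μ (PartUnity.dyn T Φ n) / (n:ℝ)
      ≤ Real.log (topStat (PartUnity.dyn T Φ n)) / (n:ℝ) := by
    intro n
    rcases Nat.eq_zero_or_pos n with rfl | hn
    · simp
    · have hn' : (0:ℝ) < n := by exact_mod_cast hn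
      apply div_le_div_of_nonneg_right (aux_statEnt_le μ _ (hc n)) hn'.le
  have h0 : ∀ n : ℕ, 0 ≤ statEnt μ (PartUnity.dyn T Φ n) / (n:ℝ) :=
    fun n => div_nonneg (aux_statEnt_nonneg μ _ (hc n)) (Nat.cast_nonneg n)
  have hb : ∀ n : ℕ, Real.log (topStat (PartUnity.dyn T Φ n)) / (n:ℝ)
      ≤ Real.log (topStat Φ) := by
    intro n
    rcases Nat.eq_zero_or_pos n with rfl | hn
    · simpa using Real.log_nonneg (aux_topStat_one_le Φ)
    · have hnpos : (0:ℝ) < n := by exact_mod_cast hn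
      have hlog : Real.log (topStat (PartUnity.dyn T Φ n)) ≤ n * Real.log (topStat Φ) := by
        calc Real.log (topStat (PartUnity.dyn T Φ n))
            ≤ Real.log ((topStat Φ) ^ n) :=
              Real.log_le_log (lt_of_lt_of_le one_pos (aux_topStat_one_le _))
                (aux_topStat_dyn_le T Φ n)
          _ = n * Real.log (topStat Φ) := by rw [Real.log_pow]
      rw [div_le_iff₀ hnpos]
      linarith
  refine Filter.limsup_le_limsup (Filter.Eventually.of_forall h1) ?_ ?_
  · exact Filter.isCoboundedUnder_le_of_le Filter.atTop h0
  · exact ⟨Real.log (topStat Φ), Filter.eventually_map.mpr (Filter.Eventually.of_forall hb)⟩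

end Aux

/-- `H̃_μ(Φ) ≤ log H̃(Φ)`; consequently `h̃_μ(T,Φ) ≤ h̃(T,Φ)` and
`h̃_μ(T) ≤ h̃_top(T)`. -/
theorem statEnt_le_log_topStat {X : Type*} [MetricSpace X] [CompactSpace X] [Nonempty X]
    [MeasurableSpace X] [BorelSpace X]
    (T : X → X) (hT : Continuous T) (hTsurj : Function.Surjective T)
    (μ : Measure X) [IsProbabilityMeasure μ] (hμ : MeasurePreserving T μ μ)
    (Φ : PartUnity X) (hΦ : Φ.Cont) :
    statEnt μ Φ ≤ Real.log (topStat Φ) ∧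
    locEnt T μ Φ ≤ topLocEnt T Φ ∧
    metEnt T μ ≤ topEnt T := by
  refine ⟨aux_statEnt_le μ Φ hΦ, aux_loc_le T hT μ Φ hΦ, ?_⟩
  exact iSup_mono fun Ψ => EReal.coe_le_coe_iff.mpr (aux_loc_le T hT μ Ψ.1 Ψ.2)
end
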